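/- arXiv:2103.04538 — 11 statements merged into one kernel-verified Lean document; each statement's English description precedes it below -/
import Mathlib

section
/- Let X_KS be the 16×16 complex matrix with superdiagonal blocks x4 = [0 I], x3 = [[I,0],[0,0]], x2 = [[0,I],[0,0]], x1 = [I;0] (2×2 block notation, block sizes 2,4,4,4,2) and all other blocks zero. Then X_KS is nilpotent with rank X_KS = 8, rank X_KS² = 2, and X_KS³ = 0. Consequently the Jordan type of X_KS is the partition (3,3,2,2,2,2,1,1) of 16. -/
set_option maxHeartbeats 2000000

open Matrix

noncomputable section

abbrev M2 := Matrix (Fin 2) (Fin 2) ℂ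
abbrev F4 := Fin 2 ⊕ Fin 2
abbrev M4 := Matrix F4 F4 ℂ
abbrev M24 := Matrix (Fin 2) F4 ℂ
abbrev M42 := Matrix F4 (Fin 2) ℂ
abbrev I16 := Fin 2 ⊕ (F4 ⊕ (F4 ⊕ (F4 ⊕ Fin 2)))

/-- The 16×16 block matrix with blocks x4, x3, x2, x1 on the superdiagonal
(block sizes 2,4,4,4,2). -/
def Xmat (x4 : M24) (x3 x2 : M4) (x1 : M42) : Matrix I16 I16 ℂ :=
  fromBlocks 0 (fromCols x4 0) 0
    (fromBlocks 0 (fromCols x3 0) 0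
      (fromBlocks 0 (fromCols x2 0) 0
        (fromBlocks 0 x1 0 0)))

/-- The 16×16 block matrix with blocks y4, y3, y2, y1 on the subdiagonal. -/
def Ymat (y1 : M24) (y2 y3 : M4) (y4 : M42) : Matrix I16 I16 ℂ :=
  fromBlocks 0 0 (fromRows y4 0)
    (fromBlocks 0 0 (fromRows y3 0)
      (fromBlocks 0 0 (fromRows y2 0)
        (fromBlocks 0 0 y1 0)))

/-- The 16×16 block diagonal matrix with diagonal blocks d1,…,d5. -/
def Dmat (d1 : M2) (d2 d3 d4 : M4) (d5 : M2) : Matrix I16 I16 ℂ :=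
  fromBlocks d1 0 0
    (fromBlocks d2 0 0
      (fromBlocks d3 0 0
        (fromBlocks d4 0 0 d5)))

def x4KS : M24 := fromCols 0 1
def x3KS : M4 := fromBlocks 1 0 0 0
def x2KS : M4 := fromBlocks 0 1 0 0
def x1KS : M42 := fromRows 1 0

def y1m (a : M2) : M24 := fromCols 0 a
def y2m (a b : M2) : M4 := fromBlocks a b 0 0
def y3m (c d : M2) : M4 := fromBlocks 0 c 0 d
def y4m (c : M2) : M42 := fromRows c 0

def wX : I16 → ℂ :=
  Sum.elim (fun _ => 1) (Sum.elim (Sum.elim (fun _ => 1) 0)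
    (Sum.elim (Sum.elim (fun _ => 1) 0) (Sum.elim (Sum.elim (fun _ => 1) 0) 0)))

def bX : I16 → Bool :=
  Sum.elim (fun _ => true) (Sum.elim (Sum.elim (fun _ => true) (fun _ => false))
    (Sum.elim (Sum.elim (fun _ => true) (fun _ => false))
      (Sum.elim (Sum.elim (fun _ => true) (fun _ => false)) (fun _ => false))))

def wX2 : I16 → ℂ :=
  Sum.elim 0 (Sum.elim (Sum.elim (fun _ => 1) 0) 0)

def bX2 : I16 → Bool :=
  Sum.elim (fun _ => false) (Sum.elim (Sum.elim (fun _ => true) (fun _ => false))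
    (fun _ => false))

local notation "X" => Xmat x4KS x3KS x2KS x1KS

lemma hP : X * Xᵀ = diagonal wX := by
  simp only [Xmat, x4KS, x3KS, x2KS, x1KS, fromBlocks_transpose, transpose_fromCols,
    transpose_fromRows, transpose_zero, transpose_one, fromBlocks_multiply,
    fromCols_mul_fromRows, fromRows_mul_fromCols, fromBlocks_mul_fromRows,
    fromCols_mul_fromBlocks, Matrix.mul_zero, Matrix.zero_mul, Matrix.mul_one,
    Matrix.one_mul, add_zero, zero_add, fromBlocks_zero, fromCols_zero, fromRows_zero]
  ext i j
  rcases i with i | (⟨i|i⟩ | (⟨i|i⟩ | (⟨i|i⟩ | i))) <;>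
    rcases j with j | (⟨j|j⟩ | (⟨j|j⟩ | (⟨j|j⟩ | j))) <;>
    simp [wX, diagonal, Matrix.one_apply]

lemma hPX : X * Xᵀ * X = X := by
  simp only [Xmat, x4KS, x3KS, x2KS, x1KS, fromBlocks_transpose, transpose_fromCols,
    transpose_fromRows, transpose_zero, transpose_one, fromBlocks_multiply,
    fromCols_mul_fromRows, fromRows_mul_fromCols, fromBlocks_mul_fromRows,
    fromCols_mul_fromBlocks, mul_fromCols, fromRows_mul, Matrix.mul_zero,
    Matrix.zero_mul, Matrix.mul_one, Matrix.one_mul, add_zero, zero_add, fromBlocks_zero, fromCols_zero, fromRows_zero]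

lemma hP2 : (X * X) * (X * X)ᵀ = diagonal wX2 := by
  simp only [Xmat, x4KS, x3KS, x2KS, x1KS, fromBlocks_transpose, transpose_fromCols,
    transpose_fromRows, transpose_zero, transpose_one, fromBlocks_multiply,
    fromCols_mul_fromRows, fromRows_mul_fromCols, fromBlocks_mul_fromRows,
    fromCols_mul_fromBlocks, mul_fromCols, fromRows_mul, Matrix.mul_zero,
    Matrix.zero_mul, Matrix.mul_one, Matrix.one_mul, add_zero, zero_add, fromBlocks_zero, fromCols_zero, fromRows_zero]
  ext i j
  rcases i with i | (⟨i|i⟩ | (⟨i|i⟩ | (⟨i|i⟩ | i))) <;>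
    rcases j with j | (⟨j|j⟩ | (⟨j|j⟩ | (⟨j|j⟩ | j))) <;>
    simp [wX2, diagonal, Matrix.one_apply]

lemma hPX2 : (X * X) * (X * X)ᵀ * (X * X) = X * X := by
  simp only [Xmat, x4KS, x3KS, x2KS, x1KS, fromBlocks_transpose, transpose_fromCols,
    transpose_fromRows, transpose_zero, transpose_one, fromBlocks_multiply,
    fromCols_mul_fromRows, fromRows_mul_fromCols, fromBlocks_mul_fromRows,
    fromCols_mul_fromBlocks, mul_fromCols, fromRows_mul, Matrix.mul_zero,
    Matrix.zero_mul, Matrix.mul_one, Matrix.one_mul, add_zero, zero_add, fromBlocks_zero, fromCols_zero, fromRows_zero]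

lemma hX3 : X * X * X = 0 := by
  simp only [Xmat, x4KS, x3KS, x2KS, x1KS, fromBlocks_multiply,
    fromCols_mul_fromRows, fromRows_mul_fromCols, fromBlocks_mul_fromRows,
    fromCols_mul_fromBlocks, mul_fromCols, fromRows_mul, Matrix.mul_zero,
    Matrix.zero_mul, Matrix.mul_one, Matrix.one_mul, add_zero, zero_add, fromBlocks_zero, fromCols_zero, fromRows_zero]

lemma key (A : Matrix I16 I16 ℂ) (w : I16 → ℂ) (b : I16 → Bool)
    (h1 : A * Aᵀ = diagonal w) (h2 : A * Aᵀ * A = A)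
    (hb : ∀ i, w i ≠ 0 ↔ b i = true) :
    A.rank = Fintype.card {i // b i = true} := by
  have h3 : A.rank ≤ (A * Aᵀ).rank := by
    conv_lhs => rw [← h2]
    exact rank_mul_le_left _ _
  have h4 : (A * Aᵀ).rank ≤ A.rank := rank_mul_le_left _ _
  have h5 : A.rank = (diagonal w).rank := h1 ▸ le_antisymm h3 h4
  rw [h5, rank_diagonal, Fintype.card_congr (Equiv.subtypeEquivRight hb)]

lemma rankX : (X).rank = 8 := by
  rw [key X wX bX hP hPX (by rintro (i | (⟨i|i⟩ | (⟨i|i⟩ | (⟨i|i⟩ | i)))) <;> simp [wX, bX])]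
  decide

lemma rankX2 : (X * X).rank = 2 := by
  rw [key (X * X) wX2 bX2 hP2 hPX2
    (by rintro (i | (⟨i|i⟩ | (⟨i|i⟩ | (⟨i|i⟩ | i)))) <;> simp [wX2, bX2])]
  decide


theorem stmt_2 :
    IsNilpotent (Xmat x4KS x3KS x2KS x1KS) ∧
    (Xmat x4KS x3KS x2KS x1KS).rank = 8 ∧
    ((Xmat x4KS x3KS x2KS x1KS) ^ 2).rank = 2 ∧
    (Xmat x4KS x3KS x2KS x1KS) ^ 3 = 0 ∧
    -- the Jordan type is (3,3,2,2,2,2,1,1): for every k ≥ 1 the number of Jordan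
    -- blocks of size ≥ k, namely rank X^(k-1) − rank X^k, equals the number of
    -- parts of the partition that are ≥ k
    (∀ k : ℕ, 1 ≤ k →
      ((Xmat x4KS x3KS x2KS x1KS) ^ (k - 1)).rank -
          ((Xmat x4KS x3KS x2KS x1KS) ^ k).rank =
        (({3, 3, 2, 2, 2, 2, 1, 1} : Multiset ℕ).filter fun m => k ≤ m).card) := by
  have hsq : Xmat x4KS x3KS x2KS x1KS ^ 2 = X * X := sq (X)
  have hcube : Xmat x4KS x3KS x2KS x1KS ^ 3 = 0 := by
    rw [pow_succ, hsq, hX3]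
  have hr2 : (Xmat x4KS x3KS x2KS x1KS ^ 2).rank = 2 := by rw [hsq]; exact rankX2
  refine ⟨⟨3, hcube⟩, rankX, hr2, hcube, ?_⟩
  intro k hk
  match k, hk with
  | 1, _ =>
    simp only [pow_one, pow_zero, Nat.sub_self]
    rw [rank_one, rankX]
    have : Fintype.card I16 = 16 := by decide
    rw [this]
    decide
  | 2, _ =>
    norm_num only
    rw [pow_one, hr2, rankX]
    decide
  | 3, _ =>
    norm_num only
    rw [hcube, hr2, rank_zero]
    decide
  | (n+4), _ =>
    have h1 : Xmat x4KS x3KS x2KS x1KS ^ (n + 4 - 1) = 0 := by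
      rw [show n + 4 - 1 = 3 + n by omega, pow_add, hcube, zero_mul]
    have h2 : Xmat x4KS x3KS x2KS x1KS ^ (n + 4) = 0 := by
      rw [show n + 4 = 3 + (n + 1) by omega, pow_add, hcube, zero_mul]
    rw [h1, h2, rank_zero]
    have h3 : (({3, 3, 2, 2, 2, 2, 1, 1} : Multiset ℕ).filter fun m => n + 4 ≤ m) = 0 := by
      rw [Multiset.filter_eq_nil]
      intro a ha
      simp only [Multiset.insert_eq_cons, Multiset.mem_cons, Multiset.mem_singleton] at ha
      omega
    rw [h3]
    simp
end
end

section
/- Let x_KS = (x4,x3,x2,x1) with x4 = [0 I], x3 = [[I,0],[0,0]], x2 = [[0,I],[0,0]], x1 = [I;0] (2×2 block notation, I the 2×2 identity). A tuple y = (y1,y2,y3,y4) with y1 ∈ Mat(2×4,ℂ), y2, y3 ∈ Mat(4×4,ℂ), y4 ∈ Mat(4×2,ℂ) satisfies the five relations x4y4 = 0, x3y3 = y4x4, x2y2 = y3x3, x1y1 = y2x2, y1x1 = 0 if and only if there exist matrices a, b, c, d ∈ Mat(2×2,ℂ) such that y1 = [0 a], y2 = [[a,b],[0,0]], y3 = [[0,c],[0,d]],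 y4 = [c;0]. In particular, the solution space is a 16-dimensional complex vector space. -/
open Matrix

noncomputable section

lemma key_s4 (y1 : M24) (y2 y3 : M4) (y4 : M42) :
    (x4KS * y4 = 0 ∧ x3KS * y3 = y4 * x4KS ∧ x2KS * y2 = y3 * x3KS ∧
        x1KS * y1 = y2 * x2KS ∧ y1 * x1KS = 0) ↔
      ∃ a b c d : M2, y1 = y1m a ∧ y2 = y2m a b ∧ y3 = y3m c d ∧ y4 = y4m c := by
  unfold x1KS x2KS x3KS x4KS y1m y2m y3m y4m
  obtain ⟨p, q, rfl⟩ : ∃ p q, y1 = fromCols p q := ⟨_, _, (fromCols_toCols y1).symm⟩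
  obtain ⟨e, f, g, h, rfl⟩ : ∃ e f g h, y2 = fromBlocks e f g h :=
    ⟨_, _, _, _, (fromBlocks_toBlocks y2).symm⟩
  obtain ⟨i, j, k, l, rfl⟩ : ∃ i j k l, y3 = fromBlocks i j k l :=
    ⟨_, _, _, _, (fromBlocks_toBlocks y3).symm⟩
  obtain ⟨u, v, rfl⟩ : ∃ u v, y4 = fromRows u v := ⟨_, _, (fromRows_toRows y4).symm⟩
  simp only [fromCols_mul_fromRows, fromBlocks_multiply, fromRows_mul_fromCols,
    Matrix.zero_mul, Matrix.mul_zero, Matrix.one_mul, Matrix.mul_one, add_zero, zero_add,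
    fromBlocks_inj, fromCols_inj.eq_iff, fromRows_inj.eq_iff]
  constructor
  · rintro ⟨h1, ⟨hi, hj, -, hv⟩, ⟨hg, hh, hk, -⟩, ⟨hp, hq, -, hg'⟩, h5⟩
    exact ⟨e, f, u, l, ⟨hp, hq⟩, ⟨rfl, rfl, hg'.symm, hh⟩, ⟨hi, hj, hk.symm, rfl⟩, rfl, h1⟩
  · rintro ⟨a, b, c, d, ⟨rfl, rfl⟩, ⟨rfl, rfl, rfl, rfl⟩, ⟨rfl, rfl, rfl, rfl⟩, rfl, rfl⟩
    simp

def Lsol : (M2 × M2 × M2 × M2) →ₗ[ℂ] (M24 × M4 × M4 × M42) where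
  toFun x := (y1m x.1, y2m x.1 x.2.1, y3m x.2.2.1 x.2.2.2, y4m x.2.2.1)
  map_add' x y := by
    unfold y1m y2m y3m y4m
    refine Prod.ext ?_ (Prod.ext ?_ (Prod.ext ?_ ?_)) <;>
      · ext (i | i) (j | j) <;>
          simp [fromCols, fromBlocks, Matrix.add_apply]
  map_smul' r x := by
    unfold y1m y2m y3m y4m
    refine Prod.ext ?_ (Prod.ext ?_ (Prod.ext ?_ ?_)) <;>
      · ext (i | i) (j | j) <;>
          simp [fromCols, fromBlocks, Matrix.smul_apply]

lemma Lsol_inj : Function.Injective Lsol := by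
  rintro ⟨a, b, c, d⟩ ⟨a', b', c', d'⟩ hx
  simp only [Lsol, LinearMap.coe_mk, AddHom.coe_mk] at hx
  obtain ⟨h1, h2, h3, h4⟩ : y1m a = y1m a' ∧ y2m a b = y2m a' b' ∧
      y3m c d = y3m c' d' ∧ y4m c = y4m c' := by
    exact ⟨congrArg Prod.fst hx, congrArg (Prod.fst ∘ Prod.snd) hx,
      congrArg (Prod.fst ∘ Prod.snd ∘ Prod.snd) hx,
      congrArg (Prod.snd ∘ Prod.snd ∘ Prod.snd) hx⟩
  simp only [y1m, y2m, y3m, y4m] at h1 h2 h3 h4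
  rw [fromCols_inj.eq_iff] at h1
  rw [fromBlocks_inj] at h2 h3
  simp_all

theorem stmt_4 :
    (∀ (y1 : M24) (y2 y3 : M4) (y4 : M42),
      (x4KS * y4 = 0 ∧ x3KS * y3 = y4 * x4KS ∧ x2KS * y2 = y3 * x3KS ∧
          x1KS * y1 = y2 * x2KS ∧ y1 * x1KS = 0) ↔
        ∃ a b c d : M2, y1 = y1m a ∧ y2 = y2m a b ∧ y3 = y3m c d ∧ y4 = y4m c) ∧
    -- the solution space is a 16-dimensional complex vector space
    ∃ S : Submodule ℂ (M24 × M4 × M4 × M42),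
      (S : Set (M24 × M4 × M4 × M42)) =
        {y : M24 × M4 × M4 × M42 |
          x4KS * y.2.2.2 = 0 ∧ x3KS * y.2.2.1 = y.2.2.2 * x4KS ∧
          x2KS * y.2.1 = y.2.2.1 * x3KS ∧ x1KS * y.1 = y.2.1 * x2KS ∧
          y.1 * x1KS = 0} ∧
      Module.finrank ℂ S = 16 := by
  constructor
  · exact key_s4
  · refine ⟨LinearMap.range Lsol, ?_, ?_⟩
    · ext y
      obtain ⟨y1, y2, y3, y4⟩ := y
      simp only [SetLike.mem_coe, LinearMap.mem_range, Set.mem_setOf_eq, key_s4]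
      constructor
      · rintro ⟨⟨a, b, c, d⟩, hx⟩
        simp only [Lsol, LinearMap.coe_mk, AddHom.coe_mk, Prod.mk.injEq] at hx
        obtain ⟨h1, h2, h3, h4⟩ := hx
        exact ⟨a, b, c, d, h1.symm, h2.symm, h3.symm, h4.symm⟩
      · rintro ⟨a, b, c, d, rfl, rfl, rfl, rfl⟩
        exact ⟨⟨a, b, c, d⟩, rfl⟩
    · rw [LinearMap.finrank_range_of_inj Lsol_inj]
      simp [Module.finrank_prod, Module.finrank_matrix]
end
end

section
/- Let x_KS = (x4,x3,x2,x1) with x4 = [0 I], x3 = [[I,0],[0,0]], x2 = [[0,I],[0,0]], x1 = [I;0]. An element h = (h4,h3,h2,h1,h0) ∈ GL2(ℂ) × GL4(ℂ) × GL4(ℂ) × GL4(ℂ) × GL2(ℂ) satisfies h4·x4 = x4·h3, h3·x3 = x3·h2, h2·x2 = x2·h1, h1·x1 = x1·h0 if and only if there exist k1, k2 ∈ GL2(ℂ) and u, v ∈ Mat(2×2,ℂ) such that h1 = [[h0,u],[0,k1]], h2 = [[k1,0],[0,k2]], h3 = [[k1,v],[0,h4]]. Consequently the stabilizer Z_H(x_KS)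 of x_KS in H is an algebraic group of dimension 24, and the H-orbit of x_KS has dimension 56 − 24 = 32. -/
open Matrix

noncomputable section

/-- The stabilizer of x_KS in H = GL2 × GL4 × GL4 × GL4 × GL2, as the set of
tuples (h4,h3,h2,h1,h0) of invertible matrices intertwining x_KS. -/
def StabXKS : Type :=
  {p : M2 × M4 × M4 × M4 × M2 //
    IsUnit p.1 ∧ IsUnit p.2.1 ∧ IsUnit p.2.2.1 ∧ IsUnit p.2.2.2.1 ∧
      IsUnit p.2.2.2.2 ∧
    p.1 * x4KS = x4KS * p.2.1 ∧ p.2.1 * x3KS = x3KS * p.2.2.1 ∧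
    p.2.2.1 * x2KS = x2KS * p.2.2.2.1 ∧ p.2.2.2.1 * x1KS = x1KS * p.2.2.2.2}

/-- The key block computation: the intertwining equations (with no invertibility
assumptions) are equivalent to the block structure on h1, h2, h3. -/
lemma keyKS (h4 h0 : M2) (h3 h2 h1 : M4) :
    (h4 * x4KS = x4KS * h3 ∧ h3 * x3KS = x3KS * h2 ∧ h2 * x2KS = x2KS * h1 ∧
      h1 * x1KS = x1KS * h0) ↔
    (h3 = fromBlocks (h2.toBlocks₁₁) (h3.toBlocks₁₂) 0 h4 ∧
     h2 = fromBlocks (h2.toBlocks₁₁) 0 0 (h2.toBlocks₂₂) ∧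
     h1 = fromBlocks h0 (h1.toBlocks₁₂) 0 (h2.toBlocks₁₁)) := by
  obtain ⟨a3, b3, c3, d3, rfl⟩ : ∃ a b c d, h3 = fromBlocks a b c d :=
    ⟨_, _, _, _, (fromBlocks_toBlocks h3).symm⟩
  obtain ⟨a2, b2, c2, d2, rfl⟩ : ∃ a b c d, h2 = fromBlocks a b c d :=
    ⟨_, _, _, _, (fromBlocks_toBlocks h2).symm⟩
  obtain ⟨a1, b1, c1, d1, rfl⟩ : ∃ a b c d, h1 = fromBlocks a b c d :=
    ⟨_, _, _, _, (fromBlocks_toBlocks h1).symm⟩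
  simp only [x4KS, x3KS, x2KS, x1KS, mul_fromCols, fromCols_mul_fromBlocks,
    fromBlocks_multiply, fromBlocks_mul_fromRows, fromRows_mul, fromCols_ext_iff,
    fromRows_ext_iff, fromBlocks_inj, toBlocks_fromBlocks₁₁, toBlocks_fromBlocks₁₂,
    toBlocks_fromBlocks₂₂, Matrix.mul_zero, Matrix.zero_mul, Matrix.mul_one, Matrix.one_mul,
    add_zero, zero_add]
  constructor
  · rintro ⟨⟨e1, e2⟩, ⟨e3, e4, e5, -⟩, ⟨e6, e7, -, e8⟩, e9, e10⟩
    exact ⟨⟨e3, trivial, e5, e2.symm⟩, ⟨trivial, e4.symm, e8, trivial⟩, e9, trivial, e10, e7.symm⟩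
  · rintro ⟨⟨e1, -, e2, e3⟩, ⟨-, e4, e5, -⟩, e6, -, e7, e8⟩
    exact ⟨⟨e2.symm, e3.symm⟩, ⟨e1, e4.symm, e2, trivial⟩, ⟨e7.symm, e8.symm, trivial, e5⟩, e6, e7⟩

lemma isUnit_fromBlocksKS {A D : M2} (B : M2) (hA : IsUnit A) (hD : IsUnit D) :
    IsUnit (fromBlocks A B 0 D : M4) := by
  rw [Matrix.isUnit_iff_isUnit_det, det_fromBlocks_zero₂₁]
  exact ((Matrix.isUnit_iff_isUnit_det A).mp hA).mul ((Matrix.isUnit_iff_isUnit_det D).mp hD)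

lemma isUnit_of_fromBlocksKS {A D : M2} {B : M2} (h : IsUnit (fromBlocks A B 0 D : M4)) :
    IsUnit A ∧ IsUnit D := by
  rw [Matrix.isUnit_iff_isUnit_det, det_fromBlocks_zero₂₁] at h
  exact ⟨(Matrix.isUnit_iff_isUnit_det A).mpr (isUnit_of_mul_isUnit_left h),
    (Matrix.isUnit_iff_isUnit_det D).mpr (isUnit_of_mul_isUnit_right h)⟩

/-- Part 1 of the theorem as a standalone lemma. -/
lemma part1KS (h4 h0 : M2) (h3 h2 h1 : M4) (u4 : IsUnit h4) (u3 : IsUnit h3)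
    (u2 : IsUnit h2) (u1 : IsUnit h1) (u0 : IsUnit h0) :
    (h4 * x4KS = x4KS * h3 ∧ h3 * x3KS = x3KS * h2 ∧ h2 * x2KS = x2KS * h1 ∧
        h1 * x1KS = x1KS * h0) ↔
      ∃ k1 k2 u v : M2, IsUnit k1 ∧ IsUnit k2 ∧
        h1 = fromBlocks h0 u 0 k1 ∧ h2 = fromBlocks k1 0 0 k2 ∧
        h3 = fromBlocks k1 v 0 h4 := by
  constructor
  · intro h
    obtain ⟨e3, e2, e1⟩ := (keyKS h4 h0 h3 h2 h1).mp h
    have hk := isUnit_of_fromBlocksKS (e2 ▸ u2)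
    exact ⟨_, _, _, _, hk.1, hk.2, e1, e2, e3⟩
  · rintro ⟨k1, k2, u, v, hk1, hk2, rfl, rfl, rfl⟩
    refine (keyKS h4 h0 _ _ _).mpr ?_
    simp [toBlocks_fromBlocks₁₁, toBlocks_fromBlocks₁₂, toBlocks_fromBlocks₂₂]

lemma stab_decomp (p : StabXKS) :
    p.1.2.1 = fromBlocks ((p.1.2.2.1).toBlocks₁₁) ((p.1.2.1).toBlocks₁₂) 0 p.1.1 ∧
    p.1.2.2.1 = fromBlocks ((p.1.2.2.1).toBlocks₁₁) 0 0 ((p.1.2.2.1).toBlocks₂₂) ∧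
    p.1.2.2.2.1 = fromBlocks p.1.2.2.2.2 ((p.1.2.2.2.1).toBlocks₁₂) 0
      ((p.1.2.2.1).toBlocks₁₁) :=
  (keyKS _ _ _ _ _).mp ⟨p.2.2.2.2.2.2.1, p.2.2.2.2.2.2.2.1, p.2.2.2.2.2.2.2.2.1,
    p.2.2.2.2.2.2.2.2.2⟩

lemma stab_k_isUnit (p : StabXKS) :
    IsUnit ((p.1.2.2.1).toBlocks₁₁) ∧ IsUnit ((p.1.2.2.1).toBlocks₂₂) :=
  isUnit_of_fromBlocksKS ((stab_decomp p).2.1 ▸ p.2.2.2.1)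

/-- The stabilizer is in bijection with GL2⁴ × Mat₂², hence of dimension 24. -/
def stabEquivKS : StabXKS ≃ (M2ˣ × M2ˣ × M2ˣ × M2ˣ × M2 × M2) where
  toFun p := (p.2.1.unit, p.2.2.2.2.2.1.unit, (stab_k_isUnit p).1.unit,
    (stab_k_isUnit p).2.unit, (p.1.2.2.2.1).toBlocks₁₂, (p.1.2.1).toBlocks₁₂)
  invFun t := ⟨((t.1 : M2), fromBlocks (t.2.2.1 : M2) t.2.2.2.2.2 0 (t.1 : M2),
      fromBlocks (t.2.2.1 : M2) 0 0 (t.2.2.2.1 : M2),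
      fromBlocks (t.2.1 : M2) t.2.2.2.2.1 0 (t.2.2.1 : M2), (t.2.1 : M2)), by
    refine ⟨t.1.isUnit, isUnit_fromBlocksKS _ t.2.2.1.isUnit t.1.isUnit,
      isUnit_fromBlocksKS _ t.2.2.1.isUnit t.2.2.2.1.isUnit,
      isUnit_fromBlocksKS _ t.2.1.isUnit t.2.2.1.isUnit, t.2.1.isUnit, ?_⟩
    have := (keyKS (t.1 : M2) (t.2.1 : M2)
      (fromBlocks (t.2.2.1 : M2) t.2.2.2.2.2 0 (t.1 : M2))
      (fromBlocks (t.2.2.1 : M2) 0 0 (t.2.2.2.1 : M2))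
      (fromBlocks (t.2.1 : M2) t.2.2.2.2.1 0 (t.2.2.1 : M2))).mpr (by
        simp [toBlocks_fromBlocks₁₁, toBlocks_fromBlocks₁₂, toBlocks_fromBlocks₂₂])
    exact ⟨this.1, this.2.1, this.2.2.1, this.2.2.2⟩⟩
  left_inv p := by
    obtain ⟨d3, d2, d1⟩ := stab_decomp p
    refine Subtype.ext ?_
    simp only [IsUnit.unit_spec]
    exact Prod.ext rfl (Prod.ext d3.symm (Prod.ext d2.symm (Prod.ext d1.symm rfl)))
  right_inv t := by
    refine Prod.ext (Units.ext ?_) (Prod.ext (Units.ext ?_) (Prod.ext (Units.ext ?_)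
      (Prod.ext (Units.ext ?_) (Prod.ext ?_ ?_)))) <;>
      simp [toBlocks_fromBlocks₁₁, toBlocks_fromBlocks₁₂, toBlocks_fromBlocks₂₂]

/-- The infinitesimal action map as a linear map. -/
def LKS : (M2 × M4 × M4 × M4 × M2) →ₗ[ℂ] (M24 × M4 × M4 × M42) where
  toFun q := (q.1 * x4KS - x4KS * q.2.1, q.2.1 * x3KS - x3KS * q.2.2.1,
    q.2.2.1 * x2KS - x2KS * q.2.2.2.1, q.2.2.2.1 * x1KS - x1KS * q.2.2.2.2)
  map_add' x y := by
    simp only [Prod.fst_add, Prod.snd_add, Prod.mk_add_mk, add_mul, mul_add, Matrix.add_mul, Matrix.mul_add, add_sub_add_comm]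
  map_smul' c x := by
    simp only [Prod.smul_fst, Prod.smul_snd, RingHom.id_apply, Prod.smul_mk, smul_sub,
      smul_mul_assoc, mul_smul_comm, Matrix.smul_mul, Matrix.mul_smul]

/-- Parametrization of the Lie algebra stabilizer. -/
def PhiKS : (M2 × M2 × M2 × M2 × M2 × M2) →ₗ[ℂ] (M2 × M4 × M4 × M4 × M2) where
  toFun t := (t.1, fromBlocks t.2.2.1 t.2.2.2.2.2 0 t.1, fromBlocks t.2.2.1 0 0 t.2.2.2.1,
    fromBlocks t.2.1 t.2.2.2.2.1 0 t.2.2.1, t.2.1)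
  map_add' x y := by
    simp only [Prod.fst_add, Prod.snd_add, Prod.mk_add_mk, fromBlocks_add, add_zero]
  map_smul' c x := by
    simp only [Prod.smul_fst, Prod.smul_snd, RingHom.id_apply, Prod.smul_mk, fromBlocks_smul,
      smul_zero]

lemma PhiKS_inj : Function.Injective PhiKS := by
  rintro ⟨a, b, c, d, u, v⟩ ⟨a', b', c', d', u', v'⟩ h
  simp only [PhiKS, LinearMap.coe_mk, AddHom.coe_mk, Prod.mk.injEq, fromBlocks_inj] at h
  obtain ⟨ha, ⟨hc, hv, -, -⟩, ⟨-, -, -, hd⟩, ⟨hb, hu, -, -⟩, -⟩ := h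
  simp_all

lemma range_PhiKS : LinearMap.range PhiKS = LinearMap.ker LKS := by
  ext q
  obtain ⟨q4, q3, q2, q1, q0⟩ := q
  simp only [LinearMap.mem_range, LinearMap.mem_ker, LKS, PhiKS, LinearMap.coe_mk,
    AddHom.coe_mk, Prod.mk.injEq, sub_eq_zero, Prod.mk_eq_zero]
  constructor
  · rintro ⟨⟨a, b, c, d, u, v⟩, h4, h3, h2, h1, h0⟩
    subst h4 h3 h2 h1 h0
    have := (keyKS a b (fromBlocks c v 0 a) (fromBlocks c 0 0 d) (fromBlocks b u 0 c)).mpr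
      (by simp [toBlocks_fromBlocks₁₁, toBlocks_fromBlocks₁₂, toBlocks_fromBlocks₂₂])
    exact ⟨this.1, this.2.1, this.2.2.1, this.2.2.2⟩
  · intro h
    obtain ⟨e3, e2, e1⟩ := (keyKS q4 q0 q3 q2 q1).mp ⟨h.1, h.2.1, h.2.2.1, h.2.2.2⟩
    exact ⟨⟨q4, q0, q2.toBlocks₁₁, q2.toBlocks₂₂, q1.toBlocks₁₂, q3.toBlocks₁₂⟩,
      rfl, e3.symm, e2.symm, e1.symm, rfl⟩

theorem stmt_6 :
    (∀ (h4 h0 : M2) (h3 h2 h1 : M4), IsUnit h4 → IsUnit h3 → IsUnit h2 →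
      IsUnit h1 → IsUnit h0 →
      ((h4 * x4KS = x4KS * h3 ∧ h3 * x3KS = x3KS * h2 ∧ h2 * x2KS = x2KS * h1 ∧
          h1 * x1KS = x1KS * h0) ↔
        ∃ k1 k2 u v : M2, IsUnit k1 ∧ IsUnit k2 ∧
          h1 = fromBlocks h0 u 0 k1 ∧ h2 = fromBlocks k1 0 0 k2 ∧
          h3 = fromBlocks k1 v 0 h4)) ∧
    -- Z_H(x_KS) has dimension 24: it is isomorphic (as a variety) to
    -- GL2(ℂ)⁴ × Mat₂(ℂ)²
    Nonempty (StabXKS ≃ M2ˣ × M2ˣ × M2ˣ × M2ˣ × M2 × M2) ∧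
    -- the H-orbit of x_KS has dimension 56 − 24 = 32: the rank of the
    -- infinitesimal action map Lie(H) → V at x_KS is 32
    Module.finrank ℂ (Submodule.span ℂ (Set.range
      fun q : M2 × M4 × M4 × M4 × M2 =>
        ((q.1 * x4KS - x4KS * q.2.1, q.2.1 * x3KS - x3KS * q.2.2.1,
          q.2.2.1 * x2KS - x2KS * q.2.2.2.1,
          q.2.2.2.1 * x1KS - x1KS * q.2.2.2.2) : M24 × M4 × M4 × M42))) = 32 := by
  refine ⟨part1KS, ⟨stabEquivKS⟩, ?_⟩
  have hr : (Set.range fun q : M2 × M4 × M4 × M4 × M2 =>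
      ((q.1 * x4KS - x4KS * q.2.1, q.2.1 * x3KS - x3KS * q.2.2.1,
        q.2.2.1 * x2KS - x2KS * q.2.2.2.1,
        q.2.2.2.1 * x1KS - x1KS * q.2.2.2.2) : M24 × M4 × M4 × M42)) =
      ↑(LinearMap.range LKS) := by
    rw [LinearMap.coe_range]; rfl
  rw [hr, Submodule.span_eq]
  have hker : Module.finrank ℂ (LinearMap.ker LKS) = 24 := by
    rw [← range_PhiKS, LinearMap.finrank_range_of_inj PhiKS_inj]
    simp [Module.finrank_prod, Module.finrank_matrix]
  have hdom : Module.finrank ℂ (M2 × M4 × M4 × M4 × M2) = 56 := by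
    simp [Module.finrank_prod, Module.finrank_matrix]
  have := LinearMap.finrank_range_add_finrank_ker LKS
  rw [hker, hdom] at this
  omega
end
end

section
/- With notation as above, suppose a, c, a', c' ∈ GL2(ℂ) and b, d, b', d' ∈ Mat(2×2,ℂ), and suppose there is h ∈ Z_H(x_KS) with h · y_KS(a,b,c,d) = y_KS(a',b',c',d'). Then the 2×2 matrices (ac)⁻¹(bd) and (a'c')⁻¹(b'd') are conjugate in GL2(ℂ); in particular they have the same characteristic polynomial. -/
open Matrix

noncomputable section

open Polynomial in
lemma charpoly_conj_unit {n : Type*} [Fintype n] [DecidableEq n]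
    (g M : Matrix n n ℂ) (hg : IsUnit g) :
    (g * M * g⁻¹).charpoly = M.charpoly := by
  have h1 : g * g⁻¹ = 1 := mul_nonsing_inv g ((isUnit_iff_isUnit_det g).mp hg)
  have hmap : (g.map C) * (g⁻¹.map C) = 1 := by
    rw [← Matrix.map_mul, h1, Matrix.map_one _ (by simp) (by simp)]
  have hd : (diagonal fun _ : n => (X : ℂ[X])) = (X : ℂ[X]) • (1 : Matrix n n ℂ[X]) := by
    ext i j; by_cases h : i = j <;> simp [h, Matrix.smul_apply, diagonal]
  have key : charmatrix (g * M * g⁻¹) =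
      (g.map C) * charmatrix M * (g⁻¹.map C) := by
    rw [charmatrix, charmatrix]
    rw [mul_sub, sub_mul]
    congr 1
    · rw [scalar_apply, hd, mul_smul_comm, smul_mul_assoc, mul_one, hmap]
    · simp [Matrix.map_mul]
  rw [Matrix.charpoly, Matrix.charpoly, key, det_mul, det_mul]
  have h2 : (g.map C).det * (g⁻¹.map C).det = 1 := by
    rw [← det_mul, hmap, det_one]
  calc (g.map C).det * (charmatrix M).det * (g⁻¹.map C).det
      = (g.map C).det * (g⁻¹.map C).det * (charmatrix M).det := by ring
    _ = (charmatrix M).det := by rw [h2, one_mul]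

theorem stmt_8 (a b c d a' b' c' d' : M2)
    (ha : IsUnit a) (hc : IsUnit c) (ha' : IsUnit a') (hc' : IsUnit c')
    (h : ∃ h0 h4 k1 k2 : M2, IsUnit h0 ∧ IsUnit h4 ∧ IsUnit k1 ∧ IsUnit k2 ∧
      (y1m (h0 * a * k1⁻¹), y2m (h0 * a * k1⁻¹) (h0 * b * k2⁻¹),
       y3m (k1 * c * h4⁻¹) (k2 * d * h4⁻¹), y4m (k1 * c * h4⁻¹)) =
      (y1m a', y2m a' b', y3m c' d', y4m c')) :
    (∃ g : M2, IsUnit g ∧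
      (a' * c')⁻¹ * (b' * d') = g * ((a * c)⁻¹ * (b * d)) * g⁻¹) ∧
    ((a * c)⁻¹ * (b * d)).charpoly = ((a' * c')⁻¹ * (b' * d')).charpoly := by
  obtain ⟨h0, h4, k1, k2, hu0, hu4, hu1, hu2, heq⟩ := h
  simp only [Prod.mk.injEq] at heq
  obtain ⟨-, e2, e3, -⟩ := heq
  have ea : h0 * a * k1⁻¹ = a' := by
    have := congrArg Matrix.toBlocks₁₁ e2
    simpa [y2m, toBlocks_fromBlocks₁₁] using this
  have eb : h0 * b * k2⁻¹ = b' := by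
    have := congrArg Matrix.toBlocks₁₂ e2
    simpa [y2m, toBlocks_fromBlocks₁₂] using this
  have ec : k1 * c * h4⁻¹ = c' := by
    have := congrArg Matrix.toBlocks₁₂ e3
    simpa [y3m, toBlocks_fromBlocks₁₂] using this
  have ed : k2 * d * h4⁻¹ = d' := by
    have := congrArg Matrix.toBlocks₂₂ e3
    simpa [y3m, toBlocks_fromBlocks₂₂] using this
  have hk1 : k1⁻¹ * k1 = 1 := nonsing_inv_mul k1 ((isUnit_iff_isUnit_det k1).mp hu1)
  have hk2 : k2⁻¹ * k2 = 1 := nonsing_inv_mul k2 ((isUnit_iff_isUnit_det k2).mp hu2)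
  have hh0 : h0⁻¹ * h0 = 1 := nonsing_inv_mul h0 ((isUnit_iff_isUnit_det h0).mp hu0)
  have hac : a' * c' = h0 * (a * c) * h4⁻¹ := by
    rw [← ea, ← ec]
    calc h0 * a * k1⁻¹ * (k1 * c * h4⁻¹) = h0 * a * (k1⁻¹ * k1) * c * h4⁻¹ := by
          noncomm_ring
      _ = h0 * (a * c) * h4⁻¹ := by rw [hk1]; noncomm_ring
  have hbd : b' * d' = h0 * (b * d) * h4⁻¹ := by
    rw [← eb, ← ed]
    calc h0 * b * k2⁻¹ * (k2 * d * h4⁻¹) = h0 * b * (k2⁻¹ * k2) * d * h4⁻¹ := by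
          noncomm_ring
      _ = h0 * (b * d) * h4⁻¹ := by rw [hk2]; noncomm_ring
  have hinv : (a' * c')⁻¹ = h4 * (a * c)⁻¹ * h0⁻¹ := by
    rw [hac, Matrix.mul_inv_rev, Matrix.mul_inv_rev,
      nonsing_inv_nonsing_inv h4 ((isUnit_iff_isUnit_det h4).mp hu4), mul_assoc]
  have main : (a' * c')⁻¹ * (b' * d') = h4 * ((a * c)⁻¹ * (b * d)) * h4⁻¹ := by
    rw [hinv, hbd]
    calc h4 * (a * c)⁻¹ * h0⁻¹ * (h0 * (b * d) * h4⁻¹)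
        = h4 * (a * c)⁻¹ * (h0⁻¹ * h0) * (b * d) * h4⁻¹ := by noncomm_ring
      _ = h4 * ((a * c)⁻¹ * (b * d)) * h4⁻¹ := by rw [hh0]; noncomm_ring
  refine ⟨⟨h4, hu4, main⟩, ?_⟩
  rw [main, charpoly_conj_unit _ _ hu4]
end
end

section
/- Let a, c ∈ GL2(ℂ) and b = d = 0. Then the stabilizer of (x_KS, y_KS(a,0,c,0)) in H, i.e. the subgroup of Z_H(x_KS) fixing y_KS(a,0,c,0) under the action h·y_KS(a,b,c,d) = y_KS(h0ak1⁻¹, h0bk2⁻¹, k1ch4⁻¹, k2dh4⁻¹), consists exactly of those h = (h4, k1, k2, h0, u, v) with h0 = (ac)h4(ac)⁻¹, k1 = c h4 c⁻¹, and h4 ∈ GL2(ℂ), k2 ∈ GL2(ℂ), u, v ∈ Mat(2×2,ℂ) arbitrary; it is an irreducible algebraic group of dimension 16. -/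
open Matrix

noncomputable section

/-- The stabilizer of y_KS(a,0,c,0) inside Z_H(x_KS), in the parametrization
(h4, k1, k2, h0, u, v) of Z_H(x_KS); the conditions are that the action
h·y_KS(a,b,c,d) = y_KS(h0ak1⁻¹, h0bk2⁻¹, k1ch4⁻¹, k2dh4⁻¹) fixes y_KS(a,0,c,0). -/
def stab9 (a c : M2) : Set (M2 × M2 × M2 × M2 × M2 × M2) :=
  {p | IsUnit p.1 ∧ IsUnit p.2.1 ∧ IsUnit p.2.2.1 ∧ IsUnit p.2.2.2.1 ∧
    p.2.2.2.1 * a * p.2.1⁻¹ = a ∧ p.2.2.2.1 * 0 * p.2.2.1⁻¹ = (0 : M2) ∧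
    p.2.1 * c * p.1⁻¹ = c ∧ p.2.2.1 * 0 * p.1⁻¹ = (0 : M2)}

open Polynomial in
lemma glpc : IsPathConnected {A : M2 | IsUnit A} := by
  have h1 : (1 : M2) ∈ {A : M2 | IsUnit A} := isUnit_one
  refine ⟨1, h1, fun {A} hA => ?_⟩
  set f : ℂ → M2 := fun z => z • A + (1 - z) • (1 : M2) with hf
  have hcont : Continuous f := by fun_prop
  set p : Polynomial ℂ :=
    (X * C (A 0 0 - 1) + C 1) * (X * C (A 1 1 - 1) + C 1) -
      (X * C (A 0 1)) * (X * C (A 1 0)) with hp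
  have heval : ∀ z : ℂ, p.eval z = (f z).det := by
    intro z
    simp [hp, hf, Matrix.det_fin_two, Matrix.one_apply, Matrix.add_apply, Matrix.smul_apply,
      smul_eq_mul]
    ring
  have hdA : IsUnit A.det := (Matrix.isUnit_iff_isUnit_det A).mp hA
  have hA1 : p.eval 1 = A.det := by rw [heval]; simp [hf]
  have hpne : p ≠ 0 := by
    intro h
    rw [h] at hA1; simp at hA1
    exact hdA.ne_zero hA1.symm
  have hfin : {z : ℂ | p.IsRoot z}.Countable := (Polynomial.finite_setOf_isRoot hpne).countable
  have hrank : 1 < Module.rank ℝ ℂ := by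
    rw [Complex.rank_real_complex]; norm_num
  have hpc : IsPathConnected {z : ℂ | p.IsRoot z}ᶜ :=
    hfin.isPathConnected_compl_of_one_lt_rank hrank
  have h0 : (0 : ℂ) ∈ {z : ℂ | p.IsRoot z}ᶜ := by
    simp only [Set.mem_compl_iff, Set.mem_setOf_eq, Polynomial.IsRoot]
    rw [heval]; simp [hf]
  have h1' : (1 : ℂ) ∈ {z : ℂ | p.IsRoot z}ᶜ := by
    simp only [Set.mem_compl_iff, Set.mem_setOf_eq, Polynomial.IsRoot]
    rw [hA1]; exact hdA.ne_zero
  have hj : JoinedIn {z : ℂ | p.IsRoot z}ᶜ 0 1 := hpc.joinedIn 0 h0 1 h1'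
  have hj2 : JoinedIn (f '' {z : ℂ | p.IsRoot z}ᶜ) (f 0) (f 1) := hj.map hcont
  have hsub : f '' {z : ℂ | p.IsRoot z}ᶜ ⊆ {A : M2 | IsUnit A} := by
    rintro _ ⟨z, hz, rfl⟩
    simp only [Set.mem_compl_iff, Set.mem_setOf_eq, Polynomial.IsRoot] at hz ⊢
    rw [heval] at hz
    exact (Matrix.isUnit_iff_isUnit_det _).mpr (isUnit_iff_ne_zero.mpr hz)
  have hf0 : f 0 = 1 := by simp [hf]
  have hf1 : f 1 = A := by simp [hf]
  rw [hf0, hf1] at hj2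
  exact hj2.mono hsub


theorem stmt_9 (a c : M2) (ha : IsUnit a) (hc : IsUnit c) :
    stab9 a c =
      {p : M2 × M2 × M2 × M2 × M2 × M2 | IsUnit p.1 ∧ IsUnit p.2.2.1 ∧
        p.2.2.2.1 = (a * c) * p.1 * (a * c)⁻¹ ∧ p.2.1 = c * p.1 * c⁻¹} ∧
    -- irreducible (in particular connected) of dimension 16:
    IsConnected (stab9 a c) ∧
    Nonempty (stab9 a c ≃ M2ˣ × M2ˣ × M2 × M2) := by
  have had : IsUnit a.det := (Matrix.isUnit_iff_isUnit_det a).mp ha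
  have hcd : IsUnit c.det := (Matrix.isUnit_iff_isUnit_det c).mp hc
  have key : stab9 a c =
      {p : M2 × M2 × M2 × M2 × M2 × M2 | IsUnit p.1 ∧ IsUnit p.2.2.1 ∧
        p.2.2.2.1 = (a * c) * p.1 * (a * c)⁻¹ ∧ p.2.1 = c * p.1 * c⁻¹} := by
    ext ⟨h4, k1, k2, h0, u, v⟩
    simp only [stab9, Set.mem_setOf_eq]
    constructor
    · rintro ⟨hu4, hu1, hu2, hu0, e1, -, e3, -⟩
      have hu4d : IsUnit h4.det := (Matrix.isUnit_iff_isUnit_det h4).mp hu4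
      have hu1d : IsUnit k1.det := (Matrix.isUnit_iff_isUnit_det k1).mp hu1
      have ek1 : k1 = c * h4 * c⁻¹ := by
        have : k1 * c = c * h4 := by
          have := congrArg (· * h4) e3
          simpa [Matrix.mul_assoc, Matrix.nonsing_inv_mul _ hu4d] using this
        calc k1 = k1 * c * c⁻¹ := by
              rw [Matrix.mul_nonsing_inv_cancel_right _ _ hcd]
          _ = c * h4 * c⁻¹ := by rw [this]
      have eh0 : h0 = a * k1 * a⁻¹ := by
        have : h0 * a = a * k1 := by
          have := congrArg (· * k1) e1
          simpa [Matrix.mul_assoc, Matrix.nonsing_inv_mul _ hu1d] using this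
        calc h0 = h0 * a * a⁻¹ := by
              rw [Matrix.mul_nonsing_inv_cancel_right _ _ had]
          _ = a * k1 * a⁻¹ := by rw [this]
      refine ⟨hu4, hu2, ?_, ek1⟩
      rw [eh0, ek1, Matrix.mul_inv_rev]
      noncomm_ring
    · rintro ⟨hu4, hu2, eh0, ek1⟩
      have hu4d : IsUnit h4.det := (Matrix.isUnit_iff_isUnit_det h4).mp hu4
      have hc' : IsUnit (c⁻¹) := (Matrix.isUnit_nonsing_inv_iff).mpr hc
      have ha' : IsUnit ((a*c)⁻¹) := (Matrix.isUnit_nonsing_inv_iff).mpr (ha.mul hc)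
      have hu1 : IsUnit k1 := by rw [ek1]; exact (hc.mul hu4).mul hc'
      have hu0 : IsUnit h0 := by rw [eh0]; exact ((ha.mul hc).mul hu4).mul ha'
      have hu1d : IsUnit k1.det := (Matrix.isUnit_iff_isUnit_det k1).mp hu1
      refine ⟨hu4, hu1, hu2, hu0, ?_, by simp, ?_, by simp⟩
      · rw [eh0, ek1, Matrix.mul_inv_rev]
        have h1 : a * c * h4 * (c⁻¹ * a⁻¹) * a = a * c * h4 * c⁻¹ := by
          rw [Matrix.mul_assoc (a*c*h4), Matrix.mul_assoc c⁻¹,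
            Matrix.nonsing_inv_mul _ had, Matrix.mul_one]
        rw [h1]
        -- (a c h4 c⁻¹) * (c h4 c⁻¹)⁻¹ = a
        rw [Matrix.mul_inv_rev, Matrix.mul_inv_rev, Matrix.nonsing_inv_nonsing_inv _ hcd]
        calc a * c * h4 * c⁻¹ * (c * (h4⁻¹ * c⁻¹)) = a * c * h4 * (c⁻¹ * c) * (h4⁻¹ * c⁻¹) := by
              noncomm_ring
          _ = a * c * (h4 * h4⁻¹) * c⁻¹ := by
              rw [Matrix.nonsing_inv_mul _ hcd, Matrix.mul_one]; noncomm_ring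
          _ = a := by
              rw [Matrix.mul_nonsing_inv _ hu4d, Matrix.mul_one,
                Matrix.mul_nonsing_inv_cancel_right _ _ hcd]
      · rw [ek1]
        rw [Matrix.mul_assoc (c * h4), Matrix.nonsing_inv_mul _ hcd, Matrix.mul_one,
          Matrix.mul_nonsing_inv_cancel_right _ _ hu4d]
  refine ⟨key, ?_, ?_⟩
  · -- connectedness
    rw [key]
    have : {p : M2 × M2 × M2 × M2 × M2 × M2 | IsUnit p.1 ∧ IsUnit p.2.2.1 ∧
        p.2.2.2.1 = (a * c) * p.1 * (a * c)⁻¹ ∧ p.2.1 = c * p.1 * c⁻¹} =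
        (fun q : M2 × M2 × M2 × M2 =>
          (q.1, c * q.1 * c⁻¹, q.2.1, (a * c) * q.1 * (a * c)⁻¹, q.2.2.1, q.2.2.2)) ''
          ({A : M2 | IsUnit A} ×ˢ {A : M2 | IsUnit A} ×ˢ Set.univ ×ˢ Set.univ) := by
      ext ⟨h4, k1, k2, h0, u, v⟩
      simp only [Set.mem_image, Set.mem_prod, Set.mem_setOf_eq, Set.mem_univ, and_true,
        Prod.mk.injEq]
      constructor
      · rintro ⟨hu4, hu2, eh0, ek1⟩
        exact ⟨(h4, k2, u, v), ⟨hu4, hu2⟩, rfl, ek1.symm, rfl, eh0.symm, rfl, rfl⟩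
      · rintro ⟨⟨q1, q2, q3, q4⟩, ⟨hq1, hq2⟩, rfl, rfl, rfl, rfl, rfl, rfl⟩
        exact ⟨hq1, hq2, rfl, rfl⟩
    rw [this]
    have hconn : IsConnected ({A : M2 | IsUnit A} ×ˢ {A : M2 | IsUnit A} ×ˢ
        (Set.univ : Set M2) ×ˢ (Set.univ : Set M2)) :=
      glpc.isConnected.prod (glpc.isConnected.prod
        (isConnected_univ.prod isConnected_univ))
    have hcm : Continuous (fun q : M2 × M2 × M2 × M2 =>
        (q.1, c * q.1 * c⁻¹, q.2.1, (a * c) * q.1 * (a * c)⁻¹, q.2.2.1, q.2.2.2)) := by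
      fun_prop
    exact hconn.image _ hcm.continuousOn
  · -- the equivalence
    rw [key]
    exact ⟨{
      toFun := fun x => (x.2.1.unit, x.2.2.1.unit, x.1.2.2.2.2.1, x.1.2.2.2.2.2)
      invFun := fun q => ⟨(q.1, c * q.1 * c⁻¹, q.2.1, (a * c) * q.1 * (a * c)⁻¹,
        q.2.2.1, q.2.2.2), q.1.isUnit, q.2.1.isUnit, rfl, rfl⟩
      left_inv := by
        rintro ⟨⟨h4, k1, k2, h0, u, v⟩, hu4, hu2, eh0, ek1⟩
        apply Subtype.ext
        simp only [IsUnit.unit_spec]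
        rw [← eh0, ← ek1]
      right_inv := by
        rintro ⟨g, k, u, v⟩
        simp }⟩
end
end

section
/- Let a, b, c, d ∈ GL2(ℂ) be such that g := (ac)⁻¹(bd) is regular semisimple (i.e. has two distinct eigenvalues). Then the stabilizer in Z_H(x_KS) of y_KS(a,b,c,d) consists of those (h4, k1, k2, h0, u, v) with h0 = (ac)h4(ac)⁻¹, k1 = c h4 c⁻¹, k2 = d h4 d⁻¹, h4 commuting with g, and u, v arbitrary; it has dimension exactly 10. -/
open Matrix

noncomputable section

namespace StabAux
open Polynomial

lemma conj_mul {s : M2} (hsd : IsUnit s.det) (X Y : M2) :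
    (s * X * s⁻¹) * (s * Y * s⁻¹) = s * (X * Y) * s⁻¹ := by
  calc (s * X * s⁻¹) * (s * Y * s⁻¹) = s * (X * (s⁻¹ * (s * (Y * s⁻¹)))) := by
        simp only [mul_assoc]
    _ = s * (X * (Y * s⁻¹)) := by rw [Matrix.nonsing_inv_mul_cancel_left _ _ hsd]
    _ = s * (X * Y) * s⁻¹ := by simp only [mul_assoc]

lemma conj_cancel {s : M2} (hsd : IsUnit s.det) (X : M2) :
    s⁻¹ * (s * X * s⁻¹) * s = X := by
  calc s⁻¹ * (s * X * s⁻¹) * s = s⁻¹ * (s * (X * (s⁻¹ * s))) := by simp only [mul_assoc]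
    _ = s⁻¹ * (s * (X * 1)) := by rw [Matrix.nonsing_inv_mul _ hsd]
    _ = X := by rw [mul_one, Matrix.nonsing_inv_mul_cancel_left _ _ hsd]

lemma diag_comm (x y z w : ℂ) :
    (Matrix.diagonal ![x, y] : M2) * Matrix.diagonal ![z, w] =
      Matrix.diagonal ![z, w] * Matrix.diagonal ![x, y] := by
  rw [Matrix.diagonal_mul_diagonal, Matrix.diagonal_mul_diagonal]
  congr 1
  funext i
  fin_cases i <;> simp [mul_comm]

lemma diag_lemma {g : M2} {l1 l2 : ℂ} (hne : l1 ≠ l2)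
    (hchar : g.charpoly = (X - C l1) * (X - C l2)) :
    ∃ s : M2, IsUnit s ∧ g * s = s * Matrix.diagonal ![l1, l2] := by
  have hCH : (g - l1 • 1) * (g - l2 • 1) = 0 := by
    have h := Matrix.aeval_self_charpoly g
    rw [hchar] at h
    simpa [Algebra.algebraMap_eq_smul_one] using h
  set m1 : M2 := g - l1 • 1 with hm1def
  set m2 : M2 := g - l2 • 1 with hm2def
  have hswap : m2 * m1 = m1 * m2 := by
    simp only [hm1def, hm2def, sub_mul, mul_sub, Matrix.smul_mul, Matrix.mul_smul,
      one_mul, mul_one, smul_smul]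
    module
  have hm21 : m2 * m1 = 0 := by rw [hswap, hCH]
  have htr : g.trace = l1 + l2 := by
    have h := Matrix.trace_eq_neg_charpoly_coeff g
    rw [hchar] at h
    have hexp : (X - C l1) * (X - C l2) = X ^ 2 - C (l1 + l2) * X + C (l1 * l2) := by
      simp only [C_add, C_mul]; ring
    rw [hexp] at h
    simp [coeff_one, coeff_X] at h
    simpa using h
  have hm1ne : m1 ≠ 0 := by
    intro h0
    have : g = l1 • 1 := by rwa [hm1def, sub_eq_zero] at h0
    rw [this] at htr
    simp [Matrix.trace_smul, Matrix.trace_one] at htr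
    apply hne
    linear_combination htr
  have hm2ne : m2 ≠ 0 := by
    intro h0
    have : g = l2 • 1 := by rwa [hm2def, sub_eq_zero] at h0
    rw [this] at htr
    simp [Matrix.trace_smul, Matrix.trace_one] at htr
    apply hne
    linear_combination -htr
  obtain ⟨i1, j1, h1⟩ : ∃ i j, m2 i j ≠ 0 := by
    by_contra hcon
    push_neg at hcon
    exact hm2ne (by ext i j; simpa using hcon i j)
  obtain ⟨i2, j2, h2⟩ : ∃ i j, m1 i j ≠ 0 := by
    by_contra hcon
    push_neg at hcon
    exact hm1ne (by ext i j; simpa using hcon i j)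
  have hg1 : g = m1 + l1 • 1 := by simp [hm1def]
  have hg2 : g = m2 + l2 • 1 := by simp [hm2def]
  have hgm2 : g * m2 = l1 • m2 := by
    rw [hg1, add_mul, Matrix.smul_mul, one_mul, hCH, zero_add]
  have hgm1 : g * m1 = l2 • m1 := by
    rw [hg2, add_mul, Matrix.smul_mul, one_mul, hm21, zero_add]
  have hm11 : m1 * m1 = (l2 - l1) • m1 := by
    have hh : m1 = m2 + (l2 - l1) • 1 := by
      simp only [hm1def, hm2def]; module
    calc m1 * m1 = m1 * (m2 + (l2 - l1) • 1) := by rw [← hh]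
    _ = m1 * m2 + (l2 - l1) • m1 := by
        rw [mul_add, Matrix.mul_smul, mul_one]
    _ = (l2 - l1) • m1 := by rw [hCH, zero_add]
  set s : M2 := Matrix.of (fun i k => ![m2 i j1, m1 i j2] k) with hsdef
  have hgs : g * s = s * Matrix.diagonal ![l1, l2] := by
    ext i k
    rw [Matrix.mul_diagonal]
    fin_cases k
    · have e := congrFun (congrFun hgm2 i) j1
      simp only [Matrix.mul_apply, Fin.sum_univ_two, Matrix.smul_apply, smul_eq_mul] at e
      simp only [hsdef, Matrix.mul_apply, Fin.sum_univ_two, Matrix.of_apply]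
      simpa [mul_comm] using e
    · have e := congrFun (congrFun hgm1 i) j2
      simp only [Matrix.mul_apply, Fin.sum_univ_two, Matrix.smul_apply, smul_eq_mul] at e
      simp only [hsdef, Matrix.mul_apply, Fin.sum_univ_two, Matrix.of_apply]
      simpa [mul_comm] using e
  refine ⟨s, ?_, hgs⟩
  rw [Matrix.isUnit_iff_isUnit_det, isUnit_iff_ne_zero]
  intro hdet
  obtain ⟨x, hx0, hxs⟩ := (Matrix.exists_mulVec_eq_zero_iff).2 hdet
  have e : ∀ i, m2 i j1 * x 0 + m1 i j2 * x 1 = 0 := by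
    intro i
    have := congrFun hxs i
    simpa [hsdef, Matrix.mulVec, dotProduct, Fin.sum_univ_two] using this
  have c1 : m1 i2 0 * m2 0 j1 + m1 i2 1 * m2 1 j1 = 0 := by
    have := congrFun (congrFun hCH i2) j1
    simpa [Matrix.mul_apply, Fin.sum_univ_two] using this
  have c2 : m1 i2 0 * m1 0 j2 + m1 i2 1 * m1 1 j2 = (l2 - l1) * m1 i2 j2 := by
    have := congrFun (congrFun hm11 i2) j2
    simpa [Matrix.mul_apply, Fin.sum_univ_two] using this
  have key : x 1 * ((l2 - l1) * m1 i2 j2) = 0 := by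
    linear_combination m1 i2 0 * e 0 + m1 i2 1 * e 1 - x 0 * c1 - x 1 * c2
  have hx1 : x 1 = 0 := by
    rcases mul_eq_zero.1 key with h | h
    · exact h
    · rcases mul_eq_zero.1 h with h' | h'
      · exact absurd (sub_eq_zero.1 h').symm hne
      · exact absurd h' h2
  have hx0' : x 0 = 0 := by
    have := e i1
    rw [hx1, mul_zero, add_zero] at this
    rcases mul_eq_zero.1 this with h | h
    · exact absurd h h1
    · exact h
  exact hx0 (by funext i; fin_cases i <;> simp [hx0', hx1])

lemma cent_lemma {s g h : M2} (hs : IsUnit s) {l1 l2 : ℂ} (hne : l1 ≠ l2)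
    (hgs : g * s = s * Matrix.diagonal ![l1, l2]) (hcomm : h * g = g * h) :
    ∃ μ1 μ2 : ℂ, h = s * Matrix.diagonal ![μ1, μ2] * s⁻¹ := by
  have hsd : IsUnit s.det := (Matrix.isUnit_iff_isUnit_det s).1 hs
  set D : M2 := Matrix.diagonal ![l1, l2] with hDdef
  set t : M2 := s⁻¹ * h * s with htdef
  have hD : D = s⁻¹ * g * s := by
    rw [mul_assoc, hgs, ← mul_assoc, Matrix.nonsing_inv_mul _ hsd, one_mul]
  have htD : t * D = D * t := by
    rw [htdef, hD]
    calc s⁻¹ * h * s * (s⁻¹ * g * s)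
        = s⁻¹ * h * (s * s⁻¹) * g * s := by noncomm_ring
      _ = s⁻¹ * (h * g) * s := by
          rw [Matrix.mul_nonsing_inv _ hsd]; noncomm_ring
      _ = s⁻¹ * (g * h) * s := by rw [hcomm]
      _ = s⁻¹ * g * (s * s⁻¹) * h * s := by
          rw [Matrix.mul_nonsing_inv _ hsd]; noncomm_ring
      _ = s⁻¹ * g * s * (s⁻¹ * h * s) := by noncomm_ring
  have offd : ∀ i j : Fin 2, i ≠ j → t i j = 0 := by
    intro i j hij
    have hthis := congrFun (congrFun htD i) j
    rw [hDdef, Matrix.mul_diagonal, Matrix.diagonal_mul] at hthis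
    have hij' : ![l1, l2] j ≠ ![l1, l2] i := by
      fin_cases i <;> fin_cases j <;>
        simp only [Matrix.cons_val_zero, Matrix.cons_val_one, Matrix.head_cons] <;>
        first
          | exact absurd rfl hij
          | exact hne
          | exact Ne.symm hne
    have h0 : t i j * (![l1, l2] j - ![l1, l2] i) = 0 := by linear_combination hthis
    rcases mul_eq_zero.1 h0 with h | h
    · exact h
    · exact absurd (sub_eq_zero.1 h) hij'
  refine ⟨t 0 0, t 1 1, ?_⟩
  have ht : t = Matrix.diagonal ![t 0 0, t 1 1] := by
    ext i j
    by_cases hij : i = j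
    · subst hij; fin_cases i <;> simp [Matrix.diagonal]
    · rw [Matrix.diagonal_apply_ne _ hij, offd i j hij]
  rw [← ht, htdef]
  rw [← mul_assoc, ← mul_assoc, Matrix.mul_nonsing_inv _ hsd, one_mul,
    mul_assoc, Matrix.mul_nonsing_inv _ hsd, mul_one]

end StabAux

/-- The stabilizer of y_KS(a,b,c,d) inside Z_H(x_KS), in the parametrization
(h4, k1, k2, h0, u, v). -/
def stab10 (a b c d : M2) : Set (M2 × M2 × M2 × M2 × M2 × M2) :=
  {p | IsUnit p.1 ∧ IsUnit p.2.1 ∧ IsUnit p.2.2.1 ∧ IsUnit p.2.2.2.1 ∧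
    p.2.2.2.1 * a * p.2.1⁻¹ = a ∧ p.2.2.2.1 * b * p.2.2.1⁻¹ = b ∧
    p.2.1 * c * p.1⁻¹ = c ∧ p.2.2.1 * d * p.1⁻¹ = d}

theorem stmt_10 (a b c d : M2)
    (ha : IsUnit a) (hb : IsUnit b) (hc : IsUnit c) (hd : IsUnit d)
    (l1 l2 : ℂ) (hne : l1 ≠ l2)
    -- g := (ac)⁻¹(bd) is regular semisimple: two distinct eigenvalues
    (hchar : ((a * c)⁻¹ * (b * d)).charpoly =
      (Polynomial.X - Polynomial.C l1) * (Polynomial.X - Polynomial.C l2)) :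
    stab10 a b c d =
      {p : M2 × M2 × M2 × M2 × M2 × M2 | IsUnit p.1 ∧
        p.2.2.2.1 = (a * c) * p.1 * (a * c)⁻¹ ∧ p.2.1 = c * p.1 * c⁻¹ ∧
        p.2.2.1 = d * p.1 * d⁻¹ ∧
        p.1 * ((a * c)⁻¹ * (b * d)) = ((a * c)⁻¹ * (b * d)) * p.1} ∧
    -- dimension exactly 10 = 2 (centralizer of g) + 8 (u,v)
    Nonempty (stab10 a b c d ≃ ℂˣ × ℂˣ × M2 × M2) := by
  have hadet : IsUnit a.det := (Matrix.isUnit_iff_isUnit_det a).1 ha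
  have hbdet : IsUnit b.det := (Matrix.isUnit_iff_isUnit_det b).1 hb
  have hcdet : IsUnit c.det := (Matrix.isUnit_iff_isUnit_det c).1 hc
  have hddet : IsUnit d.det := (Matrix.isUnit_iff_isUnit_det d).1 hd
  have hac : IsUnit (a * c) := ha.mul hc
  have hacdet : IsUnit (a * c).det := (Matrix.isUnit_iff_isUnit_det _).1 hac
  have hset : stab10 a b c d =
      {p : M2 × M2 × M2 × M2 × M2 × M2 | IsUnit p.1 ∧
        p.2.2.2.1 = (a * c) * p.1 * (a * c)⁻¹ ∧ p.2.1 = c * p.1 * c⁻¹ ∧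
        p.2.2.1 = d * p.1 * d⁻¹ ∧
        p.1 * ((a * c)⁻¹ * (b * d)) = ((a * c)⁻¹ * (b * d)) * p.1} := by
    ext ⟨h4, k1, k2, h0, u, v⟩
    simp only [stab10, Set.mem_setOf_eq]
    constructor
    · rintro ⟨hu4, hu1, hu2, hu0, e1, e2, e3, e4⟩
      have h4det : IsUnit h4.det := (Matrix.isUnit_iff_isUnit_det h4).1 hu4
      have hk1det : IsUnit k1.det := (Matrix.isUnit_iff_isUnit_det k1).1 hu1
      have hk2det : IsUnit k2.det := (Matrix.isUnit_iff_isUnit_det k2).1 hu2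
      have hk1c : k1 * c = c * h4 := by
        have h := congrArg (· * h4) e3
        simpa only [Matrix.nonsing_inv_mul_cancel_right _ _ h4det] using h
      have hk2d : k2 * d = d * h4 := by
        have h := congrArg (· * h4) e4
        simpa only [Matrix.nonsing_inv_mul_cancel_right _ _ h4det] using h
      have ha0 : h0 * a = a * k1 := by
        have h := congrArg (· * k1) e1
        simpa only [Matrix.nonsing_inv_mul_cancel_right _ _ hk1det] using h
      have hb0 : h0 * b = b * k2 := by
        have h := congrArg (· * k2) e2
        simpa only [Matrix.nonsing_inv_mul_cancel_right _ _ hk2det] using h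
      have hk1' : k1 = c * h4 * c⁻¹ := by
        rw [← hk1c, Matrix.mul_nonsing_inv_cancel_right _ _ hcdet]
      have hk2' : k2 = d * h4 * d⁻¹ := by
        rw [← hk2d, Matrix.mul_nonsing_inv_cancel_right _ _ hddet]
      have E1 : h0 * (a * c) = (a * c) * h4 := by
        calc h0 * (a * c) = (h0 * a) * c := (mul_assoc _ _ _).symm
        _ = (a * k1) * c := by rw [ha0]
        _ = a * (k1 * c) := mul_assoc _ _ _
        _ = a * (c * h4) := by rw [hk1c]
        _ = (a * c) * h4 := (mul_assoc _ _ _).symm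
      have E2 : h0 * (b * d) = (b * d) * h4 := by
        calc h0 * (b * d) = (h0 * b) * d := (mul_assoc _ _ _).symm
        _ = (b * k2) * d := by rw [hb0]
        _ = b * (k2 * d) := mul_assoc _ _ _
        _ = b * (d * h4) := by rw [hk2d]
        _ = (b * d) * h4 := (mul_assoc _ _ _).symm
      have hh0 : h0 = (a * c) * h4 * (a * c)⁻¹ := by
        rw [← E1, Matrix.mul_nonsing_inv_cancel_right _ _ hacdet]
      have h4eq : h4 = (a * c)⁻¹ * (h0 * (a * c)) := by
        rw [E1, Matrix.nonsing_inv_mul_cancel_left _ _ hacdet]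
      have hcm : h4 * ((a * c)⁻¹ * (b * d)) = ((a * c)⁻¹ * (b * d)) * h4 := by
        calc h4 * ((a * c)⁻¹ * (b * d))
            = ((a * c)⁻¹ * (h0 * (a * c))) * ((a * c)⁻¹ * (b * d)) := by rw [← h4eq]
          _ = (a * c)⁻¹ * (h0 * ((a * c) * ((a * c)⁻¹ * (b * d)))) := by
              simp only [mul_assoc]
          _ = (a * c)⁻¹ * (h0 * (b * d)) := by
              rw [Matrix.mul_nonsing_inv_cancel_left _ _ hacdet]
          _ = (a * c)⁻¹ * ((b * d) * h4) := by rw [E2]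
          _ = ((a * c)⁻¹ * (b * d)) * h4 := (mul_assoc _ _ _).symm
      exact ⟨hu4, hh0, hk1', hk2', hcm⟩
    · rintro ⟨hu4, hh0, hk1, hk2, hcm⟩
      have h4det : IsUnit h4.det := (Matrix.isUnit_iff_isUnit_det h4).1 hu4
      have hcinv : IsUnit (c⁻¹ : M2) := Matrix.isUnit_nonsing_inv_iff.2 hc
      have hdinv : IsUnit (d⁻¹ : M2) := Matrix.isUnit_nonsing_inv_iff.2 hd
      have hacinv : IsUnit ((a * c)⁻¹ : M2) := Matrix.isUnit_nonsing_inv_iff.2 hac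
      subst hh0 hk1 hk2
      refine ⟨hu4, (hc.mul hu4).mul hcinv, (hd.mul hu4).mul hdinv,
        (hac.mul hu4).mul hacinv, ?_, ?_, ?_, ?_⟩
      · -- h0 * a * k1⁻¹ = a
        simp only [Matrix.mul_inv_rev, Matrix.nonsing_inv_nonsing_inv _ hcdet, mul_assoc]
        rw [Matrix.nonsing_inv_mul_cancel_left _ _ hadet,
          Matrix.nonsing_inv_mul_cancel_left _ _ hcdet,
          Matrix.mul_nonsing_inv_cancel_left _ _ h4det,
          Matrix.mul_nonsing_inv _ hcdet, mul_one]
      · -- h0 * b * k2⁻¹ = b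
        have E : a * (c * (h4 * (c⁻¹ * (a⁻¹ * (b * d))))) = b * (d * h4) := by
          have h' := congrArg (fun X => (a * c) * X) hcm
          simp only [Matrix.mul_inv_rev, mul_assoc] at h'
          rw [Matrix.mul_nonsing_inv_cancel_left _ _ hcdet,
            Matrix.mul_nonsing_inv_cancel_left _ _ hadet] at h'
          exact h'
        have h'' := congrArg (fun X => X * (h4⁻¹ * d⁻¹)) E
        simp only [mul_assoc] at h''
        rw [Matrix.mul_nonsing_inv_cancel_left _ _ h4det,
          Matrix.mul_nonsing_inv _ hddet, mul_one] at h''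
        simp only [Matrix.mul_inv_rev, Matrix.nonsing_inv_nonsing_inv _ hddet, mul_assoc]
        exact h''
      · -- k1 * c * h4⁻¹ = c
        simp only [mul_assoc]
        rw [Matrix.nonsing_inv_mul_cancel_left _ _ hcdet,
          Matrix.mul_nonsing_inv _ h4det, mul_one]
      · -- k2 * d * h4⁻¹ = d
        simp only [mul_assoc]
        rw [Matrix.nonsing_inv_mul_cancel_left _ _ hddet,
          Matrix.mul_nonsing_inv _ h4det, mul_one]
  refine ⟨hset, ?_⟩
  obtain ⟨s, hs, hgs⟩ := StabAux.diag_lemma hne hchar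
  have hsdet : IsUnit s.det := (Matrix.isUnit_iff_isUnit_det s).1 hs
  set G : M2 := (a * c)⁻¹ * (b * d) with hGdef
  set D : M2 := Matrix.diagonal ![l1, l2] with hDdef
  have hGsD : G = s * D * s⁻¹ := by
    rw [← hgs, Matrix.mul_nonsing_inv_cancel_right _ _ hsdet]
  have memF : ∀ (μ1 μ2 : ℂˣ) (u v : M2),
      (s * Matrix.diagonal ![(μ1 : ℂ), (μ2 : ℂ)] * s⁻¹,
        c * (s * Matrix.diagonal ![(μ1 : ℂ), (μ2 : ℂ)] * s⁻¹) * c⁻¹,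
        d * (s * Matrix.diagonal ![(μ1 : ℂ), (μ2 : ℂ)] * s⁻¹) * d⁻¹,
        (a * c) * (s * Matrix.diagonal ![(μ1 : ℂ), (μ2 : ℂ)] * s⁻¹) * (a * c)⁻¹,
        u, v) ∈ stab10 a b c d := by
    intro μ1 μ2 u v
    rw [hset]
    refine ⟨?_, rfl, rfl, rfl, ?_⟩
    · rw [Matrix.isUnit_iff_isUnit_det, Matrix.det_conj hs, Matrix.det_diagonal,
        Fin.prod_univ_two]
      simp only [Matrix.cons_val_zero, Matrix.cons_val_one, Matrix.head_cons]
      exact μ1.isUnit.mul μ2.isUnit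
    · rw [hGsD, StabAux.conj_mul hsdet, StabAux.conj_mul hsdet, StabAux.diag_comm]
  let F : ℂˣ × ℂˣ × M2 × M2 → (stab10 a b c d : Set _) := fun q =>
    ⟨_, memF q.1 q.2.1 q.2.2.1 q.2.2.2⟩
  have hFbij : Function.Bijective F := by
    constructor
    · rintro ⟨μ1, μ2, u, v⟩ ⟨ν1, ν2, u', v'⟩ hqq
      simp only [F, Subtype.mk.injEq, Prod.mk.injEq] at hqq
      obtain ⟨h1, -, -, -, hu, hv⟩ := hqq
      have hT : Matrix.diagonal ![(μ1 : ℂ), (μ2 : ℂ)] =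
          Matrix.diagonal ![(ν1 : ℂ), (ν2 : ℂ)] := by
        have h2 := congrArg (fun X => s⁻¹ * X * s) h1
        simpa only [StabAux.conj_cancel hsdet] using h2
      have hμ1 : (μ1 : ℂ) = ν1 := by
        have := congrFun (congrFun hT 0) 0
        simpa [Matrix.diagonal] using this
      have hμ2 : (μ2 : ℂ) = ν2 := by
        have := congrFun (congrFun hT 1) 1
        simpa [Matrix.diagonal] using this
      simp only [Prod.mk.injEq]
      exact ⟨Units.ext hμ1, Units.ext hμ2, hu, hv⟩
    · rintro ⟨⟨h4, k1, k2, h0, u, v⟩, hp⟩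
      rw [hset] at hp
      obtain ⟨hu4, hh0, hk1, hk2, hcm⟩ := hp
      obtain ⟨μ1, μ2, hμ⟩ := StabAux.cent_lemma hs hne hgs hcm
      have hTu : IsUnit (μ1 * μ2) := by
        have h := (Matrix.isUnit_iff_isUnit_det _).1 hu4
        rw [hμ, Matrix.det_conj hs, Matrix.det_diagonal, Fin.prod_univ_two] at h
        simpa using h
      have hμ1 : μ1 ≠ 0 := by
        rintro rfl; simp at hTu
      have hμ2 : μ2 ≠ 0 := by
        rintro rfl; simp at hTu
      refine ⟨⟨Units.mk0 μ1 hμ1, Units.mk0 μ2 hμ2, u, v⟩, ?_⟩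
      apply Subtype.ext
      simp only [F, Units.val_mk0]
      exact Prod.ext hμ.symm (Prod.ext (by rw [hk1, hμ])
        (Prod.ext (by rw [hk2, hμ]) (Prod.ext (by rw [hh0, hμ]) rfl)))
  exact ⟨(Equiv.ofBijective F hFbij).symm⟩
end
end

section
/- Let Λ be the 16-dimensional vector space of tuples y_KS(a,b,c,d) = ([0 a], [[a,b],[0,0]], [[0,c],[0,d]], [c;0]) with a,b,c,d ∈ Mat(2×2,ℂ), with the action of the 24-dimensional group Z_H(x_KS) given by (h4,k1,k2,h0,u,v)·y_KS(a,b,c,d) = y_KS(h0ak1⁻¹, h0bk2⁻¹, k1ch4⁻¹, k2dh4⁻¹). Then every Z_H(x_KS)-orbit in Λ has dimension at most 14. In particular Λ has no Zariski-open Z_H(x_KS)-orbit, i.e. (Λ, Z_H(x_KS)) is not a prehomogeneous vector space. -/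
open Matrix

noncomputable section

abbrev P4 := M2 × M2 × M2 × M2

section Aux
open Polynomial

-- adjugate helpers
lemma adj_mul_mul (a X : M2) : adjugate a * (a * X) = a.det • X := by
  rw [← Matrix.mul_assoc, Matrix.adjugate_mul, Matrix.smul_mul, Matrix.one_mul]
lemma mul_adj_mul (a X : M2) : a * (adjugate a * X) = a.det • X := by
  rw [← Matrix.mul_assoc, Matrix.mul_adjugate, Matrix.smul_mul, Matrix.one_mul]
lemma mul_mul_adj (X a : M2) : X * adjugate a * a = a.det • X := by
  rw [Matrix.mul_assoc, Matrix.adjugate_mul, Matrix.mul_smul, Matrix.mul_one]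
lemma mul_mul_adj' (X a : M2) : X * a * adjugate a = a.det • X := by
  rw [Matrix.mul_assoc, Matrix.mul_adjugate, Matrix.mul_smul, Matrix.mul_one]

lemma adj_eq_zero {X : M2} (h : adjugate X = 0) : X = 0 := by
  rw [Matrix.adjugate_fin_two] at h
  ext i j
  fin_cases i <;> fin_cases j <;>
    [ (have := congrFun (congrFun h 1) 1);
      (have := congrFun (congrFun h 0) 1);
      (have := congrFun (congrFun h 1) 0);
      (have := congrFun (congrFun h 0) 0)] <;>
    simp_all

def e4 : P4 := (1,1,1,1)
def E11 : M2 := Matrix.single 0 0 1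

lemma smul_one_eq_zero {s : ℂ} (h : s • (1:M2) = 0) : s = 0 := by
  have := congrFun (congrFun h 0) 0
  simpa using this

-- independence via a projection that kills w
lemma indep_zero {w : P4} (φ : P4 →ₗ[ℂ] M2) (he : φ e4 = 1) (hw : φ w = 0)
    (hw0 : w ≠ 0) : LinearIndependent ℂ ![e4, w] := by
  rw [LinearIndependent.pair_iff]
  intro s t h
  have h1 : s • (1:M2) + t • (0:M2) = 0 := by
    rw [← he, ← hw, ← _root_.map_smul, ← _root_.map_smul, ← map_add, h, map_zero]
    rw [hw]
  rw [smul_zero, add_zero] at h1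
  have hs := smul_one_eq_zero h1
  subst hs
  rw [zero_smul, zero_add] at h
  rcases smul_eq_zero.mp h with ht | hw'
  · exact ⟨rfl, ht⟩
  · exact absurd hw' hw0

lemma indep_gen {w : P4} (φ : P4 →ₗ[ℂ] M2) (he : φ e4 = 1)
    (hns : ∀ s t : ℂ, s • (1:M2) + t • (φ w) = 0 → s = 0 ∧ t = 0) :
    LinearIndependent ℂ ![e4, w] := by
  rw [LinearIndependent.pair_iff]
  intro s t h
  refine hns s t ?_
  rw [← he, ← _root_.map_smul, ← _root_.map_smul, ← map_add, h, map_zero]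

lemma ns_of_nonscalar {K : M2} (hK : ¬ ∃ r : ℂ, K = r • 1) :
    ∀ s t : ℂ, s • (1:M2) + t • K = 0 → s = 0 ∧ t = 0 := by
  intro s t h
  by_cases ht : t = 0
  · subst ht
    rw [zero_smul, add_zero] at h
    exact ⟨smul_one_eq_zero h, rfl⟩
  · exfalso
    apply hK
    refine ⟨-s/t, ?_⟩
    have : t • K = (-s) • (1:M2) := by
      rw [neg_smul]
      exact eq_neg_of_add_eq_zero_right h
    calc K = (t⁻¹ * t) • K := by rw [inv_mul_cancel₀ ht, one_smul]
    _ = t⁻¹ • (t • K) := by rw [mul_smul]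
    _ = (-s/t) • 1 := by rw [this, smul_smul, div_eq_mul_inv, mul_comm]

lemma ns_E11 {lam : ℂ} (hl : lam ≠ 0) :
    ∀ s t : ℂ, s • (1:M2) + t • (lam • E11) = 0 → s = 0 ∧ t = 0 := by
  intro s t h
  have h11 := congrFun (congrFun h 1) 1
  have h00 := congrFun (congrFun h 0) 0
  simp [E11, Matrix.single] at h11 h00
  subst h11
  simp at h00
  rcases h00 with h | h
  · exact ⟨rfl, h⟩
  · exact absurd h hl

def pi1 : P4 →ₗ[ℂ] M2 := LinearMap.fst ℂ M2 (M2 × M2 × M2)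
def pi2 : P4 →ₗ[ℂ] M2 :=
  (LinearMap.fst ℂ M2 (M2 × M2)).comp (LinearMap.snd ℂ M2 (M2 × M2 × M2))
def pi3 : P4 →ₗ[ℂ] M2 :=
  ((LinearMap.fst ℂ M2 M2).comp (LinearMap.snd ℂ M2 (M2 × M2))).comp
    (LinearMap.snd ℂ M2 (M2 × M2 × M2))
def pi4 : P4 →ₗ[ℂ] M2 :=
  ((LinearMap.snd ℂ M2 M2).comp (LinearMap.snd ℂ M2 (M2 × M2))).comp
    (LinearMap.snd ℂ M2 (M2 × M2 × M2))

@[simp] lemma pi1_apply (w : P4) : pi1 w = w.1 := rfl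
@[simp] lemma pi2_apply (w : P4) : pi2 w = w.2.1 := rfl
@[simp] lemma pi3_apply (w : P4) : pi3 w = w.2.2.1 := rfl
@[simp] lemma pi4_apply (w : P4) : pi4 w = w.2.2.2 := rfl

lemma exists_entry_ne {X : M2} (h : X ≠ 0) : ∃ i j, X i j ≠ 0 := by
  by_contra hh
  push_neg at hh
  exact h (by ext i j; simpa using hh i j)

lemma mul_std_mul_apply (X Z : M2) (i j k l : Fin 2) :
    (X * Matrix.single j k (1:ℂ) * Z) i l = X i j * Z k l := by
  fin_cases i <;> fin_cases j <;> fin_cases k <;> fin_cases l <;>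
    simp [mul_apply, Matrix.single, Fin.sum_univ_two]

lemma exists_mul_mul_ne {X Z : M2} (hX : X ≠ 0) (hZ : Z ≠ 0) : ∃ y, X * y * Z ≠ 0 := by
  obtain ⟨i, j, hij⟩ := exists_entry_ne hX
  obtain ⟨k, l, hkl⟩ := exists_entry_ne hZ
  refine ⟨Matrix.single j k 1, fun h => ?_⟩
  have h2 := congrFun (congrFun h i) l
  rw [mul_std_mul_apply] at h2
  simp only [Matrix.zero_apply] at h2
  exact (mul_ne_zero hij hkl) h2

lemma forall_mul_mul_zero {X Z : M2} (h : ∀ y, X * y * Z = 0) : X = 0 ∨ Z = 0 := by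
  by_contra hh
  push_neg at hh
  obtain ⟨y, hy⟩ := exists_mul_mul_ne hh.1 hh.2
  exact hy (h y)

def Lmap (a b c d : M2) : P4 →ₗ[ℂ] P4 where
  toFun q := (q.1 * a - a * q.2.1, q.1 * b - b * q.2.2.1,
          q.2.1 * c - c * q.2.2.2, q.2.2.1 * d - d * q.2.2.2)
  map_add' x y := by
    simp only [Prod.fst_add, Prod.snd_add, add_mul, mul_add, Prod.mk_add_mk]
    refine Prod.ext ?_ (Prod.ext ?_ (Prod.ext ?_ ?_)) <;> simp <;> abel
  map_smul' t x := by
    simp only [Prod.smul_fst, Prod.smul_snd, smul_mul_assoc, mul_smul_comm, RingHom.id_apply,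
      Prod.smul_mk, smul_sub]

lemma mem_ker (a b c d : M2) (w : P4) :
    Lmap a b c d w = 0 ↔
      (w.1 * a = a * w.2.1 ∧ w.1 * b = b * w.2.2.1 ∧
       w.2.1 * c = c * w.2.2.2 ∧ w.2.2.1 * d = d * w.2.2.2) := by
  simp [Lmap, Prod.ext_iff, sub_eq_zero]

lemma e4_mem (a b c d : M2) : Lmap a b c d e4 = 0 := by
  simp [mem_ker, e4]

-- the universal family v(m)
lemma v_mem (a b c d m : M2)
    (hm : m * (adjugate c * (adjugate a * (b * d))) =
          adjugate c * (adjugate a * (b * d)) * m) :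
    Lmap a b c d
      (b * (d * (m * (adjugate c * adjugate a))),
       adjugate a * (b * (d * (m * adjugate c))),
       d * (m * (adjugate c * (adjugate a * b))),
       adjugate c * (adjugate a * (b * (d * m)))) = 0 := by
  rw [mem_ker]
  refine ⟨?_, ?_, ?_, ?_⟩
  · -- p*a = a*q
    calc b * (d * (m * (adjugate c * adjugate a))) * a
        = b * (d * (m * (adjugate c * (adjugate a * a)))) := by
          simp only [Matrix.mul_assoc]
      _ = a.det • (b * (d * (m * adjugate c))) := by
          rw [Matrix.adjugate_mul]
          simp only [Matrix.mul_smul, Matrix.mul_one]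
      _ = a * (adjugate a * (b * (d * (m * adjugate c)))) := by
          rw [mul_adj_mul]
  · -- p*b = b*r
    simp only [Matrix.mul_assoc]
  · -- q*c = c*s
    calc adjugate a * (b * (d * (m * adjugate c))) * c
        = adjugate a * (b * (d * (m * (adjugate c * c)))) := by
          simp only [Matrix.mul_assoc]
      _ = c.det • (adjugate a * (b * (d * m))) := by
          rw [Matrix.adjugate_mul]
          simp only [Matrix.mul_smul, Matrix.mul_one]
      _ = c * (adjugate c * (adjugate a * (b * (d * m)))) := by
          rw [mul_adj_mul]
  · -- r*d = d*s
    calc d * (m * (adjugate c * (adjugate a * b))) * d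
        = d * (m * (adjugate c * (adjugate a * (b * d)))) := by
          simp only [Matrix.mul_assoc]
      _ = d * (adjugate c * (adjugate a * (b * (d * m)))) := by
          rw [hm]
          simp only [Matrix.mul_assoc]

lemma ns_E11' : ∀ s t : ℂ, s • (1:M2) + t • E11 = 0 → s = 0 ∧ t = 0 := by
  have := ns_E11 (one_ne_zero (α := ℂ))
  simpa using this

lemma exists_right_ann {d : M2} (h : d.det = 0) : ∃ s : M2, s ≠ 0 ∧ d * s = 0 := by
  by_cases hd : d = 0
  · exact ⟨1, one_ne_zero, by simp [hd]⟩
  · refine ⟨adjugate d, fun hh => hd (adj_eq_zero hh), ?_⟩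
    rw [Matrix.mul_adjugate, h, zero_smul]

lemma adj_ne_zero {x : M2} (h : x ≠ 0) : adjugate x ≠ 0 :=
  fun hh => h (adj_eq_zero hh)

lemma sigma_swap {a b c d : M2} {w : P4}
    (h : Lmap b a d c w = 0) :
    Lmap a b c d (w.1, w.2.2.1, w.2.1, w.2.2.2) = 0 := by
  rw [mem_ker] at h ⊢
  exact ⟨h.2.1, h.1, h.2.2.2, h.2.2.1⟩

lemma indep_swap {w : P4} (h : LinearIndependent ℂ ![e4, w]) :
    LinearIndependent ℂ ![e4, (w.1, w.2.2.1, w.2.1, w.2.2.2)] := by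
  rw [LinearIndependent.pair_iff] at h ⊢
  intro s t hst
  apply h s t
  simp only [e4, Prod.ext_iff, Prod.smul_mk, Prod.mk_add_mk, Prod.fst_add, Prod.snd_add,
    Prod.smul_fst, Prod.smul_snd, Prod.fst_zero, Prod.snd_zero] at hst ⊢
  tauto

lemma ne0_of_1 {w : P4} (h : w.1 ≠ 0) : w ≠ 0 := fun hh => h (by rw [hh]; rfl)
lemma ne0_of_2 {w : P4} (h : w.2.1 ≠ 0) : w ≠ 0 := fun hh => h (by rw [hh]; rfl)
lemma ne0_of_4 {w : P4} (h : w.2.2.2 ≠ 0) : w ≠ 0 := fun hh => h (by rw [hh]; rfl)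

lemma ac0 {a b c d : M2} (h : a * c = 0) (ha : a ≠ 0) (hc : c ≠ 0) :
    ∃ w, Lmap a b c d w = 0 ∧ LinearIndependent ℂ ![e4, w] := by
  have hcd : c.det = 0 := by
    have h1 : c.det • a = 0 := by rw [← mul_mul_adj' a c, h, Matrix.zero_mul]
    rcases smul_eq_zero.mp h1 with h2 | h2
    · exact h2
    · exact absurd h2 ha
  obtain ⟨y, hy⟩ := exists_mul_mul_ne hc (adj_ne_zero hc)
  refine ⟨(0, c * y * adjugate c, 0, 0), ?_, indep_zero pi1 rfl rfl (ne0_of_2 hy)⟩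
  rw [mem_ker]
  refine ⟨?_, by simp, ?_, by simp⟩
  · show (0:M2) * a = a * (c * y * adjugate c)
    rw [← Matrix.mul_assoc, ← Matrix.mul_assoc, h, Matrix.zero_mul, Matrix.zero_mul,
      Matrix.zero_mul]
  · show c * y * adjugate c * c = c * 0
    rw [Matrix.mul_assoc, Matrix.adjugate_mul, hcd, zero_smul, Matrix.mul_zero,
      Matrix.mul_zero]

lemma conj_eq {c : M2} (hc : IsUnit c.det) (x : M2) : c * (x * c⁻¹) * c = c * x := by
  rw [Matrix.mul_assoc, Matrix.mul_assoc, Matrix.nonsing_inv_mul _ hc, Matrix.mul_one]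

lemma inv_conj_eq {b : M2} (hb : IsUnit b.det) (x : M2) :
    x * b = b * (b⁻¹ * (x * b)) := by
  rw [← Matrix.mul_assoc, Matrix.mul_nonsing_inv _ hb, Matrix.one_mul]

lemma caseA0 (b c d : M2) :
    ∃ w, Lmap 0 b c d w = 0 ∧ LinearIndependent ℂ ![e4, w] := by
  by_cases hcd : c.det = 0
  · by_cases hc : c = 0
    · refine ⟨(0, 1, 0, 0), ?_, indep_zero pi1 rfl rfl (ne0_of_2 one_ne_zero)⟩
      rw [mem_ker]; simp [hc]
    · refine ⟨(0, adjugate c, 0, 0), ?_,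
        indep_zero pi1 rfl rfl (ne0_of_2 (adj_ne_zero hc))⟩
      rw [mem_ker]
      simp [Matrix.adjugate_mul, hcd]
  · have hcu : IsUnit c.det := isUnit_iff_ne_zero.mpr hcd
    by_cases hbd : b.det = 0
    · by_cases hb : b = 0
      · refine ⟨(1, 0, 0, 0), ?_, indep_zero pi2 rfl rfl (ne0_of_1 one_ne_zero)⟩
        rw [mem_ker]; simp [hb]
      · refine ⟨(adjugate b, 0, 0, 0), ?_,
          indep_zero pi2 rfl rfl (ne0_of_1 (adj_ne_zero hb))⟩
        rw [mem_ker]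
        simp [Matrix.adjugate_mul, hbd]
    · have hbu : IsUnit b.det := isUnit_iff_ne_zero.mpr hbd
      by_cases hdd : d.det = 0
      · obtain ⟨s, hs0, hs⟩ := exists_right_ann hdd
        refine ⟨(0, c * (s * c⁻¹), 0, s), ?_, indep_zero pi1 rfl rfl (ne0_of_4 hs0)⟩
        rw [mem_ker]
        refine ⟨by simp, by simp, ?_, by simp [hs]⟩
        show c * (s * c⁻¹) * c = c * s
        exact conj_eq hcu s
      · have hdu : IsUnit d.det := isUnit_iff_ne_zero.mpr hdd
        refine ⟨(E11, c * ((d⁻¹ * (b⁻¹ * (E11 * b) * d)) * c⁻¹), b⁻¹ * (E11 * b),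
            d⁻¹ * (b⁻¹ * (E11 * b) * d)), ?_, indep_gen pi1 rfl ns_E11'⟩
        rw [mem_ker]
        refine ⟨by simp, ?_, ?_, ?_⟩
        · show E11 * b = b * (b⁻¹ * (E11 * b))
          exact inv_conj_eq hbu E11
        · show c * ((d⁻¹ * (b⁻¹ * (E11 * b) * d)) * c⁻¹) * c
            = c * (d⁻¹ * (b⁻¹ * (E11 * b) * d))
          exact conj_eq hcu _
        · show b⁻¹ * (E11 * b) * d = d * (d⁻¹ * (b⁻¹ * (E11 * b) * d))
          exact inv_conj_eq hdu _

lemma caseC0 (a b d : M2) (ha : a ≠ 0) (hb : b ≠ 0) :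
    ∃ w, Lmap a b 0 d w = 0 ∧ LinearIndependent ℂ ![e4, w] := by
  by_cases had : a.det = 0
  · refine ⟨(0, adjugate a, 0, 0), ?_, indep_zero pi1 rfl rfl (ne0_of_2 (adj_ne_zero ha))⟩
    rw [mem_ker]
    simp [Matrix.mul_adjugate, had]
  · have hau : IsUnit a.det := isUnit_iff_ne_zero.mpr had
    by_cases hdd : d.det = 0
    · obtain ⟨s, hs0, hs⟩ := exists_right_ann hdd
      refine ⟨(0, 0, 0, s), ?_, indep_zero pi1 rfl rfl (ne0_of_4 hs0)⟩
      rw [mem_ker]; simp [hs]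
    · have hdu : IsUnit d.det := isUnit_iff_ne_zero.mpr hdd
      by_cases hbd : b.det = 0
      · refine ⟨(adjugate b, a⁻¹ * (adjugate b * a), 0, 0), ?_,
          indep_zero pi3 rfl rfl (ne0_of_1 (adj_ne_zero hb))⟩
        rw [mem_ker]
        refine ⟨?_, ?_, by simp, by simp⟩
        · show adjugate b * a = a * (a⁻¹ * (adjugate b * a))
          exact inv_conj_eq hau _
        · show adjugate b * b = b * 0
          rw [Matrix.adjugate_mul, hbd, zero_smul, Matrix.mul_zero]
      · have hbu : IsUnit b.det := isUnit_iff_ne_zero.mpr hbd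
        refine ⟨(b * (E11 * b⁻¹), a⁻¹ * (b * (E11 * b⁻¹) * a), E11,
            d⁻¹ * (E11 * d)), ?_, indep_gen pi3 rfl ns_E11'⟩
        rw [mem_ker]
        refine ⟨?_, ?_, by simp, ?_⟩
        · show b * (E11 * b⁻¹) * a = a * (a⁻¹ * (b * (E11 * b⁻¹) * a))
          exact inv_conj_eq hau _
        · show b * (E11 * b⁻¹) * b = b * E11
          exact conj_eq hbu E11
        · show E11 * d = d * (d⁻¹ * (E11 * d))
          exact inv_conj_eq hdu E11

lemma exists_indep (a b c d : M2) :
    ∃ w, Lmap a b c d w = 0 ∧ LinearIndependent ℂ ![e4, w] := by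
  by_cases ha : a = 0
  · subst ha; exact caseA0 b c d
  by_cases hb : b = 0
  · obtain ⟨w, hw, hi⟩ := caseA0 a d c
    rw [← hb] at hw
    exact ⟨_, sigma_swap hw, indep_swap hi⟩
  by_cases hc : c = 0
  · subst hc; exact caseC0 a b d ha hb
  by_cases hd : d = 0
  · obtain ⟨w, hw, hi⟩ := caseC0 b a c hb ha
    rw [← hd] at hw
    exact ⟨_, sigma_swap hw, indep_swap hi⟩
  -- all four nonzero
  by_cases hK : adjugate c * (adjugate a * (b * d)) = 0
  · by_cases hbd : b * d = 0
    · -- σ-transport of ac0 applied to (b, a, d, c)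
      obtain ⟨w, hw, hi⟩ := ac0 (b := a) (d := c) hbd hb hd
      exact ⟨_, sigma_swap hw, indep_swap hi⟩
    · by_cases hCA : adjugate c * adjugate a = 0
      · have hac : a * c = 0 := by
          apply adj_eq_zero
          rw [Matrix.adjugate_mul_distrib]
          exact hCA
        exact ac0 hac ha hc
      · obtain ⟨m, hm⟩ := exists_mul_mul_ne hbd hCA
        have hcomm : m * (adjugate c * (adjugate a * (b * d))) =
            adjugate c * (adjugate a * (b * d)) * m := by
          rw [hK, Matrix.mul_zero, Matrix.zero_mul]
        refine ⟨_, v_mem a b c d m hcomm, indep_zero pi4 rfl ?_ (ne0_of_1 ?_)⟩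
        · show adjugate c * (adjugate a * (b * (d * m))) = 0
          calc adjugate c * (adjugate a * (b * (d * m)))
              = adjugate c * (adjugate a * (b * d)) * m := by
                simp only [Matrix.mul_assoc]
            _ = 0 := by rw [hK, Matrix.zero_mul]
        · show b * (d * (m * (adjugate c * adjugate a))) ≠ 0
          intro hh
          apply hm
          calc b * d * m * (adjugate c * adjugate a)
              = b * (d * (m * (adjugate c * adjugate a))) := by
                simp only [Matrix.mul_assoc]
            _ = 0 := hh
  · by_cases hsc : ∃ r : ℂ, adjugate c * (adjugate a * (b * d)) = r • 1
    · obtain ⟨r, hr⟩ := hsc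
      have hr0 : r ≠ 0 := by
        intro h0
        rw [h0, zero_smul] at hr
        exact hK hr
      have hcomm : E11 * (adjugate c * (adjugate a * (b * d))) =
          adjugate c * (adjugate a * (b * d)) * E11 := by
        rw [hr, Matrix.mul_smul, Matrix.smul_mul, Matrix.mul_one, Matrix.one_mul]
      refine ⟨_, v_mem a b c d E11 hcomm, indep_gen pi4 rfl ?_⟩
      have h4 : adjugate c * (adjugate a * (b * (d * E11))) = r • E11 := by
        calc adjugate c * (adjugate a * (b * (d * E11)))
            = adjugate c * (adjugate a * (b * d)) * E11 := by
              simp only [Matrix.mul_assoc]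
          _ = r • E11 := by rw [hr, Matrix.smul_mul, Matrix.one_mul]
      show ∀ s t : ℂ, s • (1:M2) + t • (adjugate c * (adjugate a * (b * (d * E11)))) = 0
        → s = 0 ∧ t = 0
      rw [h4]
      exact ns_E11 hr0
    · have hcomm : (1:M2) * (adjugate c * (adjugate a * (b * d))) =
          adjugate c * (adjugate a * (b * d)) * 1 := by
        rw [Matrix.one_mul, Matrix.mul_one]
      refine ⟨_, v_mem a b c d 1 hcomm, indep_gen pi4 rfl ?_⟩
      show ∀ s t : ℂ, s • (1:M2) + t • (adjugate c * (adjugate a * (b * (d * 1)))) = 0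
        → s = 0 ∧ t = 0
      rw [Matrix.mul_one]
      exact ns_of_nonscalar hsc

lemma finrank_P4 : Module.finrank ℂ P4 = 16 := by
  simp [Module.finrank_prod, Module.finrank_matrix]

lemma two_le_ker (a b c d : M2) :
    2 ≤ Module.finrank ℂ (LinearMap.ker (Lmap a b c d)) := by
  obtain ⟨w, hw, hi⟩ := exists_indep a b c d
  have hle : Submodule.span ℂ (Set.range ![e4, w]) ≤ LinearMap.ker (Lmap a b c d) := by
    rw [Submodule.span_le]
    rintro x ⟨i, rfl⟩
    fin_cases i <;> simp [LinearMap.mem_ker, e4_mem, hw]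
  have h2 : Module.finrank ℂ (Submodule.span ℂ (Set.range ![e4, w])) = 2 := by
    rw [finrank_span_eq_card hi]
    simp
  calc 2 = Module.finrank ℂ (Submodule.span ℂ (Set.range ![e4, w])) := h2.symm
    _ ≤ Module.finrank ℂ (LinearMap.ker (Lmap a b c d)) := Submodule.finrank_mono hle

lemma part1 (a b c d : M2) :
    Module.finrank ℂ (Submodule.span ℂ (Set.range
      fun q : M2 × M2 × M2 × M2 =>
        ((q.1 * a - a * q.2.1, q.1 * b - b * q.2.2.1,
          q.2.1 * c - c * q.2.2.2, q.2.2.1 * d - d * q.2.2.2) :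
          M2 × M2 × M2 × M2))) ≤ 14 := by
  have hr : (Set.range fun q : P4 =>
      ((q.1 * a - a * q.2.1, q.1 * b - b * q.2.2.1,
        q.2.1 * c - c * q.2.2.2, q.2.2.1 * d - d * q.2.2.2) : P4))
      = Set.range ⇑(Lmap a b c d) := rfl
  rw [hr, ← LinearMap.coe_range, Submodule.span_eq]
  have h1 := LinearMap.finrank_range_add_finrank_ker (Lmap a b c d)
  rw [finrank_P4] at h1
  have h2 := two_le_ker a b c d
  set x := Module.finrank ℂ (LinearMap.ker (Lmap a b c d)) with hx
  set y := Module.finrank ℂ (LinearMap.range (Lmap a b c d)) with hy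
  omega


lemma poly_curve_not_open {S : Set P4} (hS : IsOpen S) (x v : P4) (hx : x ∈ S)
    (P : P4 → ℂ) (hvan : ∀ y ∈ S, P y = 0)
    (g : Polynomial ℂ) (hg : ∀ t : ℂ, P (x + t • v) = g.eval t)
    (h1 : g.eval 1 ≠ 0) : False := by
  have hg0 : g ≠ 0 := fun h => h1 (by rw [h]; simp)
  have hfin := Polynomial.finite_setOf_isRoot hg0
  have hcont : Continuous fun t : ℂ => x + t • v := by continuity
  have hU : IsOpen {t : ℂ | x + t • v ∈ S} := hS.preimage hcont
  have h0 : (0:ℂ) ∈ {t : ℂ | x + t • v ∈ S} := by simp [hx]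
  have hsub : {t : ℂ | x + t • v ∈ S} ⊆ {t | g.IsRoot t} := by
    intro t ht
    have := hvan _ ht
    rw [hg] at this
    exact this
  have hinf : ({t : ℂ | x + t • v ∈ S}).Infinite :=
    infinite_of_mem_nhds (0:ℂ) (hU.mem_nhds h0)
  exact hinf (hfin.subset hsub)

-- polynomial matrices along a line
def pm (m n : M2) : Matrix (Fin 2) (Fin 2) (Polynomial ℂ) :=
  m.map Polynomial.C + (Polynomial.X : Polynomial ℂ) • n.map Polynomial.C

lemma ev_pm (t : ℂ) (m n : M2) :
    (Polynomial.evalRingHom t).mapMatrix (pm m n) = m + t • n := by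
  ext i j
  simp [pm, RingHom.mapMatrix_apply, Matrix.map_apply]
  ring

lemma ev_trace (t : ℂ) (M : Matrix (Fin 2) (Fin 2) (Polynomial ℂ)) :
    (M.trace).eval t = ((Polynomial.evalRingHom t).mapMatrix M).trace := by
  simp [Matrix.trace, Matrix.diag, RingHom.mapMatrix_apply, Matrix.map_apply]

lemma ev_det (t : ℂ) (M : Matrix (Fin 2) (Fin 2) (Polynomial ℂ)) :
    (M.det).eval t = ((Polynomial.evalRingHom t).mapMatrix M).det := by
  have := RingHom.map_det (Polynomial.evalRingHom t) M
  simpa using this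

-- trace-adjugate identity for 2x2
lemma tradj (X Y : M2) :
    (X * adjugate Y).trace = X.trace * Y.trace - (X * Y).trace := by
  simp [Matrix.adjugate_fin_two, Matrix.trace_fin_two, Matrix.mul_apply, Fin.sum_univ_two]
  ring

lemma orbit_inv (u v h w : M2) :
    ((h*u*w).trace * (h*v*w).trace - ((h*u*w)*(h*v*w)).trace)^2 * (u.det * v.det)
      = (u.trace * v.trace - (u*v).trace)^2 * ((h*u*w).det * (h*v*w).det) := by
  have e1 : (h*u*w).trace * (h*v*w).trace - ((h*u*w)*(h*v*w)).trace
      = (w.det * h.det) * (u.trace * v.trace - (u*v).trace) := by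
    rw [← tradj, ← tradj]
    have e2 : (h*u*w) * adjugate (h*v*w) = w.det • (h * (u * (adjugate v * adjugate h))) := by
      calc (h*u*w) * adjugate (h*v*w)
          = h*u*w * (adjugate w * (adjugate v * adjugate h)) := by
            rw [Matrix.adjugate_mul_distrib, Matrix.adjugate_mul_distrib]
        _ = h * (u * ((w * adjugate w) * (adjugate v * adjugate h))) := by
            simp only [Matrix.mul_assoc]
        _ = w.det • (h * (u * (adjugate v * adjugate h))) := by
            rw [Matrix.mul_adjugate, Matrix.smul_mul, Matrix.one_mul]
            simp only [Matrix.mul_smul]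
    rw [e2, Matrix.trace_smul]
    have e3 : (h * (u * (adjugate v * adjugate h))).trace = h.det * (u * adjugate v).trace := by
      rw [Matrix.trace_mul_comm]
      calc (u * (adjugate v * adjugate h) * h).trace
          = (u * adjugate v * (adjugate h * h)).trace := by simp only [Matrix.mul_assoc]
        _ = h.det * (u * adjugate v).trace := by
            rw [Matrix.adjugate_mul, Matrix.mul_smul, Matrix.mul_one, Matrix.trace_smul]
            simp
    rw [e3, smul_eq_mul]
    ring
  rw [e1]
  simp only [Matrix.det_mul]
  ring

lemma cancel_mid {k : M2} (hk : IsUnit k) (x z : M2) : (x * k⁻¹) * (k * z) = x * z := by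
  rw [Matrix.mul_assoc x, ← Matrix.mul_assoc k⁻¹,
    Matrix.nonsing_inv_mul _ ((Matrix.isUnit_iff_isUnit_det _).mp hk), Matrix.one_mul]

def E22 : M2 := Matrix.single 1 1 1

lemma part2 (a b c d : M2) :
    ¬ IsOpen {y : M2 × M2 × M2 × M2 |
      ∃ h4 k1 k2 h0 : M2, IsUnit h4 ∧ IsUnit k1 ∧ IsUnit k2 ∧ IsUnit h0 ∧
        y = (h0 * a * k1⁻¹, h0 * b * k2⁻¹, k1 * c * h4⁻¹, k2 * d * h4⁻¹)} := by
  intro hS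
  have hx : ((a, b, c, d) : P4) ∈ {y : M2 × M2 × M2 × M2 |
      ∃ h4 k1 k2 h0 : M2, IsUnit h4 ∧ IsUnit k1 ∧ IsUnit k2 ∧ IsUnit h0 ∧
        y = (h0 * a * k1⁻¹, h0 * b * k2⁻¹, k1 * c * h4⁻¹, k2 * d * h4⁻¹)} :=
    by
      have hone : ((1 : M2))⁻¹ = 1 := Matrix.inv_eq_left_inv (by rw [Matrix.one_mul])
      exact ⟨1, 1, 1, 1, isUnit_one, isUnit_one, isUnit_one, isUnit_one, by
        rw [hone, Matrix.mul_one, Matrix.mul_one, Matrix.mul_one, Matrix.mul_one,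
          Matrix.one_mul, Matrix.one_mul, Matrix.one_mul, Matrix.one_mul]⟩
  by_cases hda : a.det = 0
  · refine poly_curve_not_open hS (a,b,c,d) ((1:M2) - a, 0, 0, 0) hx
      (fun y => (y.1).det) ?_ ((pm a ((1:M2) - a)).det) ?_ ?_
    · rintro y ⟨h4,k1,k2,h0,_,_,_,_,rfl⟩
      simp [Matrix.det_mul, hda]
    · intro t
      rw [ev_det, ev_pm]
      rfl
    · rw [ev_det, ev_pm]
      norm_num
  by_cases hdb : b.det = 0
  · refine poly_curve_not_open hS (a,b,c,d) (0, (1:M2) - b, 0, 0) hx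
      (fun y => (y.2.1).det) ?_ ((pm b ((1:M2) - b)).det) ?_ ?_
    · rintro y ⟨h4,k1,k2,h0,_,_,_,_,rfl⟩
      simp [Matrix.det_mul, hdb]
    · intro t
      rw [ev_det, ev_pm]
      rfl
    · rw [ev_det, ev_pm]
      norm_num
  by_cases hdc : c.det = 0
  · refine poly_curve_not_open hS (a,b,c,d) (0, 0, (1:M2) - c, 0) hx
      (fun y => (y.2.2.1).det) ?_ ((pm c ((1:M2) - c)).det) ?_ ?_
    · rintro y ⟨h4,k1,k2,h0,_,_,_,_,rfl⟩
      simp [Matrix.det_mul, hdc]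
    · intro t
      rw [ev_det, ev_pm]
      rfl
    · rw [ev_det, ev_pm]
      norm_num
  by_cases hdd : d.det = 0
  · refine poly_curve_not_open hS (a,b,c,d) (0, 0, 0, (1:M2) - d) hx
      (fun y => (y.2.2.2).det) ?_ ((pm d ((1:M2) - d)).det) ?_ ?_
    · rintro y ⟨h4,k1,k2,h0,_,_,_,_,rfl⟩
      simp [Matrix.det_mul, hdd]
    · intro t
      rw [ev_det, ev_pm]
      rfl
    · rw [ev_det, ev_pm]
      norm_num
  -- all determinants nonzero
  set T : ℂ := (a*c).trace * (b*d).trace - ((a*c)*(b*d)).trace with hT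
  set D : ℂ := (a*c).det * (b*d).det with hD
  have hD0 : D ≠ 0 := by
    rw [hD]
    simp only [Matrix.det_mul]
    exact mul_ne_zero (mul_ne_zero hda hdc) (mul_ne_zero hdb hdd)
  set Pf : P4 → ℂ := fun y =>
    ((y.1*y.2.2.1).trace * (y.2.1*y.2.2.2).trace - ((y.1*y.2.2.1)*(y.2.1*y.2.2.2)).trace)^2 * D
      - T^2 * ((y.1*y.2.2.1).det * (y.2.1*y.2.2.2).det) with hPf
  set A := pm a ((1:M2) - a) with hA
  set B := pm b ((1:M2) - b) with hB
  set Cc := pm c ((1:M2) - c) with hCc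
  set Dd := pm d (E22 - d) with hDd
  set g : Polynomial ℂ :=
    ((A*Cc).trace * (B*Dd).trace - ((A*Cc)*(B*Dd)).trace)^2 * Polynomial.C D
      - Polynomial.C (T^2) * ((A*Cc).det * (B*Dd).det) with hgdef
  have hgeq : ∀ t : ℂ, Pf ((a,b,c,d) + t • ((1:M2) - a, (1:M2) - b, (1:M2) - c, E22 - d))
      = g.eval t := by
    intro t
    rw [hPf, hgdef, hA, hB, hCc, hDd]
    simp only [Polynomial.eval_sub, Polynomial.eval_mul, Polynomial.eval_pow,
      Polynomial.eval_C, ev_trace, ev_det, _root_.map_mul, ev_pm]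
    rfl
  refine poly_curve_not_open hS (a,b,c,d) ((1:M2) - a, (1:M2) - b, (1:M2) - c, E22 - d) hx
    Pf ?_ g hgeq ?_
  · rintro y ⟨h4,k1,k2,h0,hu4,hu1,hu2,hu0,rfl⟩
    have e13 : (h0 * a * k1⁻¹) * (k1 * c * h4⁻¹) = h0 * (a*c) * h4⁻¹ := by
      rw [Matrix.mul_assoc k1 c h4⁻¹, cancel_mid hu1]
      simp only [Matrix.mul_assoc]
    have e24 : (h0 * b * k2⁻¹) * (k2 * d * h4⁻¹) = h0 * (b*d) * h4⁻¹ := by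
      rw [Matrix.mul_assoc k2 d h4⁻¹, cancel_mid hu2]
      simp only [Matrix.mul_assoc]
    rw [hPf]
    simp only
    rw [e13, e24, hT, hD, sub_eq_zero]
    exact orbit_inv (a*c) (b*d) h0 h4⁻¹
  · rw [← hgeq 1, one_smul]
    have hw0 : ((a,b,c,d) : P4) + ((1:M2) - a, (1:M2) - b, (1:M2) - c, E22 - d)
        = ((1:M2), (1:M2), (1:M2), E22) := by
      simp [Prod.ext_iff]
    rw [hw0, hPf]
    simp only
    have h1 : ((1:M2) * 1).trace = 2 := by simp [Matrix.trace_one]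
    have h2 : ((1:M2) * E22).trace = 1 := by
      simp [E22, Matrix.trace, Matrix.diag, Matrix.single, Fin.sum_univ_two]
    have h3 : ((1:M2) * 1 * ((1:M2) * E22)).trace = 1 := by
      simp only [Matrix.one_mul]
      simp [E22, Matrix.trace, Matrix.diag, Matrix.single, Fin.sum_univ_two]
    have h4 : ((1:M2) * E22).det = 0 := by
      simp only [Matrix.one_mul]
      simp [E22, Matrix.det_fin_two, Matrix.single]
    rw [h1, h2, h3, h4]
    simp [hD0]
    norm_num

end Aux

theorem stmt_11 (a b c d : M2) :
    -- every Z_H(x_KS)-orbit in Λ has dimension ≤ 14: the rank of the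
    -- infinitesimal action map at y_KS(a,b,c,d) is at most 14
    Module.finrank ℂ (Submodule.span ℂ (Set.range
      fun q : M2 × M2 × M2 × M2 =>
        ((q.1 * a - a * q.2.1, q.1 * b - b * q.2.2.1,
          q.2.1 * c - c * q.2.2.2, q.2.2.1 * d - d * q.2.2.2) :
          M2 × M2 × M2 × M2))) ≤ 14 ∧
    -- in particular no orbit is open, i.e. Λ is not a prehomogeneous
    -- vector space for Z_H(x_KS)
    ¬ IsOpen {y : M2 × M2 × M2 × M2 |
      ∃ h4 k1 k2 h0 : M2, IsUnit h4 ∧ IsUnit k1 ∧ IsUnit k2 ∧ IsUnit h0 ∧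
        y = (h0 * a * k1⁻¹, h0 * b * k2⁻¹, k1 * c * h4⁻¹, k2 * d * h4⁻¹)} :=
  ⟨part1 a b c d, part2 a b c d⟩
end
end

section
/- Let a, b, c, d ∈ GL2(ℂ). Then there exists h ∈ Z_H(x_KS) such that h · y_KS(a,b,c,d) = y_KS(I, b', I, I) where b' = (ac)⁻¹(bd) (I the 2×2 identity). Explicitly, one may take h4 = I, k1 = c⁻¹, k2 = d⁻¹, h0 = (ac)⁻¹, u = v = 0. -/
open Matrix

noncomputable section

theorem stmt_12 (a b c d : M2)
    (ha : IsUnit a) (hb : IsUnit b) (hc : IsUnit c) (hd : IsUnit d) :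
    -- there is h ∈ Z_H(x_KS) carrying y_KS(a,b,c,d) to y_KS(I,(ac)⁻¹(bd),I,I)
    (∃ h0 k1 k2 h4 : M2, IsUnit h0 ∧ IsUnit k1 ∧ IsUnit k2 ∧ IsUnit h4 ∧
      (y1m (h0 * a * k1⁻¹), y2m (h0 * a * k1⁻¹) (h0 * b * k2⁻¹),
       y3m (k1 * c * h4⁻¹) (k2 * d * h4⁻¹), y4m (k1 * c * h4⁻¹)) =
      (y1m 1, y2m 1 ((a * c)⁻¹ * (b * d)), y3m 1 1, y4m 1)) ∧
    -- explicitly, h4 = I, k1 = c⁻¹, k2 = d⁻¹, h0 = (ac)⁻¹ works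
    ((a * c)⁻¹ * a * (c⁻¹)⁻¹ = (1 : M2) ∧
     (a * c)⁻¹ * b * (d⁻¹)⁻¹ = (a * c)⁻¹ * (b * d) ∧
     c⁻¹ * c * (1 : M2)⁻¹ = 1 ∧
     d⁻¹ * d * (1 : M2)⁻¹ = 1) := by
  have hadet := (Matrix.isUnit_iff_isUnit_det a).mp ha
  have hbdet := (Matrix.isUnit_iff_isUnit_det b).mp hb
  have hcdet := (Matrix.isUnit_iff_isUnit_det c).mp hc
  have hddet := (Matrix.isUnit_iff_isUnit_det d).mp hd
  have hacdet := (Matrix.isUnit_iff_isUnit_det (a*c)).mp (ha.mul hc)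
  have e1 : (a * c)⁻¹ * a * (c⁻¹)⁻¹ = (1 : M2) := by
    rw [Matrix.nonsing_inv_nonsing_inv c hcdet, Matrix.mul_inv_rev,
      mul_assoc, mul_assoc, ← mul_assoc a⁻¹ a c, Matrix.nonsing_inv_mul a hadet,
      one_mul, Matrix.nonsing_inv_mul c hcdet]
  have e2 : (a * c)⁻¹ * b * (d⁻¹)⁻¹ = (a * c)⁻¹ * (b * d) := by
    rw [Matrix.nonsing_inv_nonsing_inv d hddet, mul_assoc]
  have e3 : c⁻¹ * c * (1 : M2)⁻¹ = 1 := by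
    rw [inv_one, mul_one, Matrix.nonsing_inv_mul c hcdet]
  have e4 : d⁻¹ * d * (1 : M2)⁻¹ = 1 := by
    rw [inv_one, mul_one, Matrix.nonsing_inv_mul d hddet]
  refine ⟨⟨(a*c)⁻¹, c⁻¹, d⁻¹, 1, ?_, ?_, ?_, isUnit_one, ?_⟩, e1, e2, e3, e4⟩
  · exact (Matrix.isUnit_nonsing_inv_iff).mpr (ha.mul hc)
  · exact (Matrix.isUnit_nonsing_inv_iff).mpr hc
  · exact (Matrix.isUnit_nonsing_inv_iff).mpr hd
  · rw [e1, e2, e3, e4]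
end
end

section
/- Let t1, t2 ∈ ℂ with t1 ≠ 0, t2 ≠ 0, and t1 ≠ t2. Then the system of equations in unknowns b1, b2, c3, f3 ∈ ℂ: (i) −b1 + f3 = 0, (ii) −c3 + f3 = 0, (iii) t1·b2 + b2·c3 + 1 = 0, (iv) t2·b2·c3 + b1 = 0, has exactly two solutions: (b1,b2,c3,f3) = (0, −1/t1, 0, 0) and (b1,b2,c3,f3) = (t2−t1, −1/t2, t2−t1, t2−t1). -/
theorem stmt_14 (t1 t2 : ℂ) (ht1 : t1 ≠ 0) (ht2 : t2 ≠ 0) (hne : t1 ≠ t2) :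
    (∀ b1 b2 c3 f3 : ℂ,
      (-b1 + f3 = 0 ∧ -c3 + f3 = 0 ∧ t1 * b2 + b2 * c3 + 1 = 0 ∧
        t2 * b2 * c3 + b1 = 0) ↔
      ((b1, b2, c3, f3) = ((0 : ℂ), -1 / t1, (0 : ℂ), (0 : ℂ)) ∨
        (b1, b2, c3, f3) = (t2 - t1, -1 / t2, t2 - t1, t2 - t1))) ∧
    -- and these two solutions are distinct
    ((0 : ℂ), -1 / t1, (0 : ℂ), (0 : ℂ)) ≠
      (t2 - t1, -1 / t2, t2 - t1, t2 - t1) := by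
  constructor
  · intro b1 b2 c3 f3
    simp only [Prod.mk.injEq]
    constructor
    · rintro ⟨h1, h2, h3, h4⟩
      have hf : f3 = b1 := by linear_combination h1
      have hc : c3 = b1 := by linear_combination h1 - h2
      have h4' : b1 * (t2 * b2 + 1) = 0 := by linear_combination h4 - t2 * b2 * hc
      rcases mul_eq_zero.1 h4' with hb | hb
      · left
        have hc0 : c3 = 0 := hc.trans hb
        have hb2 : b2 = -1 / t1 := by
          field_simp
          linear_combination h3 - b2 * hc0
        exact ⟨hb, hb2, hc0, hf.trans hb⟩
      · right
        have hb2 : b2 = -1 / t2 := by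
          field_simp
          linear_combination hb
        have hb1 : b1 = t2 - t1 := by
          rw [hc, hb2] at h3
          field_simp at h3
          have h5 : t2 * (b1 - (t2 - t1)) = 0 := by linear_combination -t2 * h3
          have := (mul_eq_zero.1 h5).resolve_left ht2
          linear_combination this
        exact ⟨hb1, hb2, hc.trans hb1, hf.trans hb1⟩
    · rintro (⟨h1, h2, h3, h4⟩ | ⟨h1, h2, h3, h4⟩) <;> subst h1 h2 h3 h4
      · exact ⟨by ring, by ring, by field_simp; ring, by ring⟩
      · exact ⟨by ring, by ring, by field_simp; ring, by field_simp; ring⟩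
  · intro h
    simp only [Prod.mk.injEq] at h
    exact hne (by linear_combination h.1)
end

section
/- Define Arthur rectangles R(a,b) as in the previous item. Then the multisegment m_KS = { [−2,−1], [−2,−1], [−1,1], [−1,1], [0,0], [0,0], [1,2], [1,2] } is NOT a multiset union of Arthur rectangles: there is no finite multiset of pairs (a_i, b_i) of nonnegative integers with a_i + b_i even such that the multiset union of the R(a_i, b_i) equals m_KS. -/
/-- The 'Arthur rectangle' R(a,b): the multiset of segments
[−(a+b)/2 + j, −(a+b)/2 + a + j] for j = 0, 1, …, b, each segment being the
set of consecutive integers Icc m n. -/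
noncomputable def Rseg (a b : ℕ) : Multiset (Finset ℤ) :=
  (Multiset.range (b + 1)).map fun j =>
    Finset.Icc (-(((a : ℤ) + (b : ℤ)) / 2) + j) (-(((a : ℤ) + (b : ℤ)) / 2) + a + j)

lemma mem_of_mem_sum {α : Type*} {a : α} {S : Multiset (Multiset α)}
    (h : a ∈ S.sum) : ∃ s ∈ S, a ∈ s :=
  Multiset.mem_join.mp h

theorem stmt_17 :
    ¬ ∃ L : Multiset (ℕ × ℕ),
      (∀ p ∈ L, Even (p.1 + p.2)) ∧
      (L.map fun p => Rseg p.1 p.2).sum =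
        ({Finset.Icc (-2 : ℤ) (-1), Finset.Icc (-2 : ℤ) (-1),
          Finset.Icc (-1 : ℤ) 1, Finset.Icc (-1 : ℤ) 1,
          Finset.Icc (0 : ℤ) 0, Finset.Icc (0 : ℤ) 0,
          Finset.Icc (1 : ℤ) 2, Finset.Icc (1 : ℤ) 2} : Multiset (Finset ℤ)) := by
  rintro ⟨L, heven, hsum⟩
  set M : Multiset (Finset ℤ) :=
      ({Finset.Icc (-2 : ℤ) (-1), Finset.Icc (-2 : ℤ) (-1),
        Finset.Icc (-1 : ℤ) 1, Finset.Icc (-1 : ℤ) 1,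
        Finset.Icc (0 : ℤ) 0, Finset.Icc (0 : ℤ) 0,
        Finset.Icc (1 : ℤ) 2, Finset.Icc (1 : ℤ) 2} : Multiset (Finset ℤ)) with hM
  have h1 : Finset.Icc (-2 : ℤ) (-1) ∈ (L.map fun p => Rseg p.1 p.2).sum := by
    rw [hsum]; simp [hM]
  obtain ⟨m, hmL, hmem⟩ := mem_of_mem_sum h1
  obtain ⟨p, hpL, rfl⟩ := Multiset.mem_map.mp hmL
  obtain ⟨a, b⟩ := p
  rw [Rseg] at hmem
  obtain ⟨j, hj, hEq⟩ := Multiset.mem_map.mp hmem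
  have hjnn : (0:ℤ) ≤ j := by
    simp at hj
    rcases hj with rfl | ⟨n, _, rfl⟩ <;> positivity
  set c : ℤ := -(((a : ℤ) + (b : ℤ)) / 2) with hc
  have h2 : (-2 : ℤ) ∈ Finset.Icc (c + j) (c + a + j) := by rw [hEq]; simp
  have h5 : (-1 : ℤ) ∈ Finset.Icc (c + j) (c + a + j) := by rw [hEq]; simp
  have h3 : c + (j : ℤ) ∈ Finset.Icc (-2 : ℤ) (-1) := by
    rw [← hEq]
    exact Finset.mem_Icc.mpr ⟨le_refl _, by
      have : (0:ℤ) ≤ (a:ℤ) := Int.natCast_nonneg a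
      omega⟩
  have h4 : c + a + (j : ℤ) ∈ Finset.Icc (-2 : ℤ) (-1) := by
    rw [← hEq]
    exact Finset.mem_Icc.mpr ⟨by
      have : (0:ℤ) ≤ (a:ℤ) := Int.natCast_nonneg a
      omega, le_refl _⟩
  rw [Finset.mem_Icc] at h2 h3 h4 h5
  have ha : (a : ℤ) = 1 := by omega
  have ha' : a = 1 := by exact_mod_cast ha
  subst ha'
  have hb : Odd b := by
    have h := heven (1, b) hpL
    rw [Nat.even_iff] at h
    exact Nat.odd_iff.mpr (by omega)
  have hsub : Rseg 1 b ≤ M := by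
    rw [← hsum]
    exact Multiset.single_le_sum (fun x _ => Multiset.zero_le x) _ hmL
  have hmemM : ∀ s ∈ Rseg 1 b, s ∈ M := fun s hs => Multiset.mem_of_le hsub hs
  have h0 : Finset.Icc c (c + 1) ∈ Rseg 1 b := by
    rw [Rseg]
    refine Multiset.mem_map.mpr ⟨0, ?_, ?_⟩
    · simp
      omega
    · rw [hc]; push_cast; ring_nf
  have h0M := hmemM _ h0
  have hcle : c ≤ -2 := by omega
  have hc2 : c = -2 := by
    simp only [hM, Multiset.insert_eq_cons, Multiset.mem_cons, Multiset.mem_singleton] at h0M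
    have hcmem : c ∈ Finset.Icc c (c + 1) := Finset.mem_Icc.mpr ⟨le_refl _, by omega⟩
    rcases h0M with h | h | h | h | h | h | h | h <;>
      · rw [h, Finset.mem_Icc] at hcmem; omega
  have hb3 : b = 3 := by
    have h2' : ((1 : ℤ) + b) / 2 = 2 := by omega
    rcases hb with ⟨k, hk⟩
    subst hk
    push_cast at h2'
    omega
  subst hb3
  have h1' : Finset.Icc (-1 : ℤ) 0 ∈ Rseg 1 3 := by
    rw [Rseg]
    refine Multiset.mem_map.mpr ⟨1, ?_, ?_⟩
    · simp
    · norm_num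
  have hbad := hmemM _ h1'
  simp only [hM, Multiset.insert_eq_cons, Multiset.mem_cons, Multiset.mem_singleton] at hbad
  rcases hbad with h | h | h | h | h | h | h | h <;>
    · rw [Finset.ext_iff] at h
      have e0 := h 0
      have e1 := h 1
      have e2 := h (-1)
      simp only [Finset.mem_Icc] at e0 e1 e2
      omega
end

section
/- Let t1 ≠ t2 be nonzero complex numbers with t1·t2 ≠ 0 and set b = [[t1,1],[0,t2]]. Then the stabilizer in Z_H(x_KS) of y_KS(I, b, I, I) has dimension exactly 10, and hence the Z_H(x_KS)-orbit of y_KS(I, b, I, I) in the 16-dimensional space { y_KS(a,b,c,d) : a,b,c,d ∈ Mat(2×2,ℂ) } has dimension 24 − 10 = 14, i.e. codimension 2. -/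
open Matrix

noncomputable section

/-- The stabilizer of y_KS(I, [[t1,1],[0,t2]], I, I) inside Z_H(x_KS), in the
parametrization (h4, k1, k2, h0, u, v). -/
def stab19 (t1 t2 : ℂ) : Type :=
  {p : M2 × M2 × M2 × M2 × M2 × M2 //
    IsUnit p.1 ∧ IsUnit p.2.1 ∧ IsUnit p.2.2.1 ∧ IsUnit p.2.2.2.1 ∧
    p.2.2.2.1 * 1 * p.2.1⁻¹ = (1 : M2) ∧
    p.2.2.2.1 * !![t1, 1; 0, t2] * p.2.2.1⁻¹ = !![t1, 1; 0, t2] ∧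
    p.2.1 * 1 * p.1⁻¹ = (1 : M2) ∧ p.2.2.1 * 1 * p.1⁻¹ = (1 : M2)}

namespace Aux19

def bm (t1 t2 : ℂ) : M2 := !![t1, 1; 0, t2]

def cm (t1 t2 x y : ℂ) : M2 := !![x, (y - x) / (t2 - t1); 0, y]

lemma comm_char {t1 t2 : ℂ} (h : M2) :
    h * bm t1 t2 = bm t1 t2 * h ↔
      h 1 0 = 0 ∧ h 0 1 * (t2 - t1) = h 1 1 - h 0 0 := by
  constructor
  · intro e
    have e' := fun i j => Matrix.ext_iff.mpr e i j
    have e00 := e' 0 0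
    have e01 := e' 0 1
    simp [bm, Matrix.mul_apply, Fin.sum_univ_two] at e00 e01
    exact ⟨by linear_combination -e00, by linear_combination e01⟩
  · rintro ⟨h1, h2⟩
    ext i j
    fin_cases i <;> fin_cases j <;>
      simp [bm, Matrix.mul_apply, Fin.sum_univ_two, h1] <;>
      (first | linear_combination h2 | linear_combination -h2 | ring)

lemma cm_entries (t1 t2 x y : ℂ) :
    cm t1 t2 x y 0 0 = x ∧ cm t1 t2 x y 1 1 = y ∧ cm t1 t2 x y 1 0 = 0 ∧
      cm t1 t2 x y 0 1 = (y - x) / (t2 - t1) := by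
  refine ⟨?_, ?_, ?_, ?_⟩ <;> simp [cm]

lemma cm_comm {t1 t2 : ℂ} (hne : t1 ≠ t2) (x y : ℂ) :
    cm t1 t2 x y * bm t1 t2 = bm t1 t2 * cm t1 t2 x y := by
  have ht : t2 - t1 ≠ 0 := sub_ne_zero.mpr (Ne.symm hne)
  refine (comm_char _).mpr ⟨by simp [cm], ?_⟩
  simp [cm]
  field_simp

lemma cm_det (t1 t2 x y : ℂ) : (cm t1 t2 x y).det = x * y := by
  simp [cm, Matrix.det_fin_two_of]

lemma eq_of_comm {t1 t2 : ℂ} (hne : t1 ≠ t2) {h : M2}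
    (hc : h * bm t1 t2 = bm t1 t2 * h) : h = cm t1 t2 (h 0 0) (h 1 1) := by
  have ht : t2 - t1 ≠ 0 := sub_ne_zero.mpr (Ne.symm hne)
  obtain ⟨h1, h2⟩ := (comm_char h).mp hc
  ext i j
  fin_cases i <;> fin_cases j <;> simp [cm, h1]
  field_simp
  linear_combination h2

lemma mul_inv_one {h k : M2} (hk : IsUnit k) (e : h * k⁻¹ = 1) : h = k := by
  have hk' : IsUnit k.det := (Matrix.isUnit_iff_isUnit_det k).mp hk
  calc h = h * k⁻¹ * k := by
        rw [Matrix.mul_assoc, Matrix.nonsing_inv_mul k hk', Matrix.mul_one]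
    _ = k := by rw [e, Matrix.one_mul]

lemma diag_ne {h : M2} (hu : IsUnit h) (h10 : h 1 0 = 0) :
    h 0 0 ≠ 0 ∧ h 1 1 ≠ 0 := by
  have hd : IsUnit h.det := (Matrix.isUnit_iff_isUnit_det h).mp hu
  rw [Matrix.det_fin_two, h10] at hd
  simp only [mul_zero, sub_zero] at hd
  have := hd.ne_zero
  exact ⟨left_ne_zero_of_mul this, right_ne_zero_of_mul this⟩

lemma cm_isUnit {t1 t2 : ℂ} {x y : ℂ} (hx : x ≠ 0) (hy : y ≠ 0) :
    IsUnit (cm t1 t2 x y) := by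
  rw [Matrix.isUnit_iff_isUnit_det, cm_det]
  exact (isUnit_iff_ne_zero).mpr (mul_ne_zero hx hy)

end Aux19

namespace Aux19

lemma mul_inv_eq {a c k : M2} (hk : IsUnit k) (e : a * k⁻¹ = c) : a = c * k := by
  have hk' : IsUnit k.det := (Matrix.isUnit_iff_isUnit_det k).mp hk
  calc a = a * k⁻¹ * k := by
        rw [Matrix.mul_assoc, Matrix.nonsing_inv_mul k hk', Matrix.mul_one]
    _ = c * k := by rw [e]

variable {t1 t2 : ℂ}

lemma stab_struct (hne : t1 ≠ t2) (p : stab19 t1 t2) :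
    p.1.2.1 = p.1.2.2.2.1 ∧ p.1.2.2.1 = p.1.2.2.2.1 ∧ p.1.1 = p.1.2.2.2.1 ∧
      p.1.2.2.2.1 * bm t1 t2 = bm t1 t2 * p.1.2.2.2.1 := by
  obtain ⟨h4u, k1u, k2u, h0u, e1, e2, e3, e4⟩ := p.2
  rw [Matrix.mul_one] at e1 e3 e4
  have hk1 : p.1.2.2.2.1 = p.1.2.1 := mul_inv_one k1u e1
  have hk3 : p.1.2.1 = p.1.1 := mul_inv_one h4u e3
  have hk4 : p.1.2.2.1 = p.1.1 := mul_inv_one h4u e4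
  have hk2 : p.1.2.2.1 = p.1.2.2.2.1 := by rw [hk4, ← hk3, ← hk1]
  have hcomm : p.1.2.2.2.1 * bm t1 t2 = bm t1 t2 * p.1.2.2.2.1 := by
    have := mul_inv_eq k2u e2
    rw [hk2] at this
    exact this
  exact ⟨hk1.symm, hk2, hk3.symm.trans hk1.symm, hcomm⟩

lemma stab_ne (hne : t1 ≠ t2) (p : stab19 t1 t2) :
    p.1.2.2.2.1 0 0 ≠ 0 ∧ p.1.2.2.2.1 1 1 ≠ 0 := by
  have h0u := p.2.2.2.2.1
  have hc := (stab_struct hne p).2.2.2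
  exact diag_ne h0u ((comm_char _).mp hc).1

def stabEquiv (t1 t2 : ℂ) (hne : t1 ≠ t2) : stab19 t1 t2 ≃ ℂˣ × ℂˣ × M2 × M2 where
  toFun p := (Units.mk0 _ (stab_ne hne p).1, Units.mk0 _ (stab_ne hne p).2,
    p.1.2.2.2.2.1, p.1.2.2.2.2.2)
  invFun z :=
    ⟨(cm t1 t2 z.1 z.2.1, cm t1 t2 z.1 z.2.1, cm t1 t2 z.1 z.2.1, cm t1 t2 z.1 z.2.1,
      z.2.2.1, z.2.2.2), by
      have hu : IsUnit (cm t1 t2 (z.1 : ℂ) (z.2.1 : ℂ)) :=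
        cm_isUnit z.1.ne_zero z.2.1.ne_zero
      have hd : IsUnit (cm t1 t2 (z.1 : ℂ) (z.2.1 : ℂ)).det :=
        (Matrix.isUnit_iff_isUnit_det _).mp hu
      have hself : cm t1 t2 (z.1 : ℂ) (z.2.1 : ℂ) * (cm t1 t2 (z.1 : ℂ) (z.2.1 : ℂ))⁻¹ = 1 :=
        Matrix.mul_nonsing_inv _ hd
      refine ⟨hu, hu, hu, hu, by rw [Matrix.mul_one]; exact hself, ?_,
        by rw [Matrix.mul_one]; exact hself, by rw [Matrix.mul_one]; exact hself⟩
      show cm t1 t2 _ _ * bm t1 t2 * _ = bm t1 t2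
      rw [cm_comm hne, Matrix.mul_assoc, hself, Matrix.mul_one]⟩
  left_inv p := by
    obtain ⟨hk1, hk2, hk4, hcomm⟩ := stab_struct hne p
    have hcm : cm t1 t2 (p.1.2.2.2.1 0 0) (p.1.2.2.2.1 1 1) = p.1.2.2.2.1 :=
      (eq_of_comm hne hcomm).symm
    apply Subtype.ext
    obtain ⟨⟨h4, k1, k2, h0, u, v⟩, hp⟩ := p
    simp only at hcm hk1 hk2 hk4 ⊢
    simp [Units.mk0, hcm, hk1, hk2, hk4]
  right_inv z := by
    obtain ⟨x, y, u, v⟩ := z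
    refine Prod.ext (Units.ext ?_) (Prod.ext (Units.ext ?_) rfl) <;> simp [cm]

def Lmap (t1 t2 : ℂ) : (M2 × M2 × M2 × M2) →ₗ[ℂ] (M2 × M2 × M2 × M2) where
  toFun q := (q.1 - q.2.1, q.1 * bm t1 t2 - bm t1 t2 * q.2.2.1,
    q.2.1 - q.2.2.2, q.2.2.1 - q.2.2.2)
  map_add' p q := by
    refine Prod.ext ?_ (Prod.ext ?_ (Prod.ext ?_ ?_)) <;>
      simp [add_mul, mul_add] <;> abel
  map_smul' c q := by
    refine Prod.ext ?_ (Prod.ext ?_ (Prod.ext ?_ ?_)) <;>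
      simp [smul_sub, Matrix.smul_mul, Matrix.mul_smul]

def kerEquiv (t1 t2 : ℂ) (hne : t1 ≠ t2) :
    LinearMap.ker (Lmap t1 t2) ≃ₗ[ℂ] ℂ × ℂ where
  toFun q := (q.1.1 0 0, q.1.1 1 1)
  map_add' _ _ := rfl
  map_smul' _ _ := rfl
  invFun z := ⟨(cm t1 t2 z.1 z.2, cm t1 t2 z.1 z.2, cm t1 t2 z.1 z.2, cm t1 t2 z.1 z.2), by
    simp [LinearMap.mem_ker, Lmap, Prod.ext_iff, sub_eq_zero, cm_comm hne]⟩
  left_inv q := by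
    obtain ⟨⟨a, b, c, d⟩, hq⟩ := q
    simp only [LinearMap.mem_ker, Lmap, LinearMap.coe_mk, AddHom.coe_mk, Prod.mk_eq_zero,
      sub_eq_zero, Prod.ext_iff, Prod.fst_zero, Prod.snd_zero] at hq
    obtain ⟨e1, e2, e3, e4⟩ := hq
    have hcd : c = a := by rw [e4, ← e3, ← e1]
    have hcomm : a * bm t1 t2 = bm t1 t2 * a := by rw [e2, hcd]
    have hcm : cm t1 t2 (a 0 0) (a 1 1) = a := (eq_of_comm hne hcomm).symm
    subst e1
    subst e3
    subst hcd
    apply Subtype.ext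
    simp only [hcm]
  right_inv z := by
    refine Prod.ext ?_ ?_ <;> simp [cm]

end Aux19

theorem stmt_19 (t1 t2 : ℂ) (hne : t1 ≠ t2) (ht1 : t1 ≠ 0) (ht2 : t2 ≠ 0) :
    -- the stabilizer has dimension exactly 10
    Nonempty (stab19 t1 t2 ≃ ℂˣ × ℂˣ × M2 × M2) ∧
    -- hence the orbit has dimension 24 − 10 = 14, i.e. codimension 2 in the
    -- 16-dimensional space: the infinitesimal action map has rank 14
    Module.finrank ℂ (Submodule.span ℂ (Set.range
      fun q : M2 × M2 × M2 × M2 =>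
        ((q.1 * 1 - 1 * q.2.1, q.1 * !![t1, 1; 0, t2] - !![t1, 1; 0, t2] * q.2.2.1,
          q.2.1 * 1 - 1 * q.2.2.2, q.2.2.1 * 1 - 1 * q.2.2.2) :
          M2 × M2 × M2 × M2))) = 14 := by
  constructor
  · exact ⟨Aux19.stabEquiv t1 t2 hne⟩
  · have hfun : (fun q : M2 × M2 × M2 × M2 =>
        ((q.1 * 1 - 1 * q.2.1, q.1 * !![t1, 1; 0, t2] - !![t1, 1; 0, t2] * q.2.2.1,
          q.2.1 * 1 - 1 * q.2.2.2, q.2.2.1 * 1 - 1 * q.2.2.2) :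
          M2 × M2 × M2 × M2)) = ⇑(Aux19.Lmap t1 t2) := by
      funext q
      simp [Aux19.Lmap, Aux19.bm]
    rw [hfun, ← LinearMap.coe_range, Submodule.span_eq]
    have h1 := LinearMap.finrank_range_add_finrank_ker (Aux19.Lmap t1 t2)
    have hdom : Module.finrank ℂ (M2 × M2 × M2 × M2) = 16 := by
      simp [Module.finrank_prod, Module.finrank_matrix, Module.finrank_self]
    have hker : Module.finrank ℂ (LinearMap.ker (Aux19.Lmap t1 t2)) = 2 := by
      rw [(Aux19.kerEquiv t1 t2 hne).finrank_eq]
      simp [Module.finrank_prod]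
    rw [hdom, hker] at h1
    omega
end
end
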